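/- arXiv:2008.01060 — 6 statements merged into one kernel-verified Lean document; each statement's English description precedes it below -/
import Mathlib

section
/- Let g(x) = exp(-π|x|²) on ℝ^d, h^{(l)} = ∂_l g for l = 1,…,d, and k = Δg. Then for all α, β > 0, ∑_{l=1}^d h^{(l)}_α ∗ h^{(l)}_β = (αβ/(α²+β²)) k_{√(α²+β²)}, where f_λ(x) = λ^{-d} f(x/λ). -/
open Real MeasureTheory

/-- The standard Gaussian `g(x) = exp(-π|x|²)` on `ℝ^d`. -/
noncomputable def gauss (d : ℕ) (x : EuclideanSpace ℝ (Fin d)) : ℝ :=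
  Real.exp (-π * ‖x‖ ^ 2)

/-- The L¹-normalized dilate `f_λ(x) = λ^{-d} f(λ⁻¹ x)`. -/
noncomputable def dil (d : ℕ) (l : ℝ) (f : EuclideanSpace ℝ (Fin d) → ℝ)
    (x : EuclideanSpace ℝ (Fin d)) : ℝ :=
  (l ^ d)⁻¹ * f (l⁻¹ • x)

/-- The `l`-th partial derivative `h^{(l)} = ∂_l g` of the standard Gaussian. -/
noncomputable def gaussD (d : ℕ) (l : Fin d) (x : EuclideanSpace ℝ (Fin d)) : ℝ :=
  fderiv ℝ (gauss d) x (EuclideanSpace.single l 1)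

/-- The Laplacian `k = Δg` of the standard Gaussian. -/
noncomputable def gaussLap (d : ℕ) (x : EuclideanSpace ℝ (Fin d)) : ℝ :=
  ∑ l : Fin d, fderiv ℝ (fun y => fderiv ℝ (gauss d) y (EuclideanSpace.single l 1)) x
    (EuclideanSpace.single l 1)

lemma gauss_hasFDerivAt (d : ℕ) (x : EuclideanSpace ℝ (Fin d)) :
    HasFDerivAt (gauss d) ((gauss d x * (-π)) • (2 • (innerSL ℝ x))) x := by
  have h1 : HasFDerivAt (fun y : EuclideanSpace ℝ (Fin d) => ‖y‖ ^ 2)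
      (2 • (innerSL ℝ x)) x := (hasStrictFDerivAt_norm_sq x).hasFDerivAt
  have h2 : HasFDerivAt (gauss d) _ x := ((h1.const_mul (-π)).exp)
  refine h2.congr_fderiv ?_
  · ext y; simp [gauss]; ring

lemma gauss_fderiv_single (d : ℕ) (l : Fin d) (x : EuclideanSpace ℝ (Fin d)) :
    fderiv ℝ (gauss d) x (EuclideanSpace.single l 1) = -2 * π * x l * gauss d x := by
  rw [(gauss_hasFDerivAt d x).fderiv]
  simp [real_inner_comm, EuclideanSpace.inner_single_left, EuclideanSpace.inner_single_right]
  ring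

lemma gaussD_eq (d : ℕ) (l : Fin d) (x : EuclideanSpace ℝ (Fin d)) :
    gaussD d l x = -2 * π * x l * gauss d x := gauss_fderiv_single d l x

lemma gaussLap_eq (d : ℕ) (x : EuclideanSpace ℝ (Fin d)) :
    gaussLap d x = ∑ l : Fin d, (-2 * π + 4 * π ^ 2 * (x l) ^ 2) * gauss d x := by
  unfold gaussLap
  refine Finset.sum_congr rfl fun l _ => ?_
  have hfun : (fun y : EuclideanSpace ℝ (Fin d) => fderiv ℝ (gauss d) y (EuclideanSpace.single l 1))
      = fun y => -2 * π * y l * gauss d y := by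
    ext y; exact gauss_fderiv_single d l y
  rw [hfun]
  have hp : HasFDerivAt (fun y : EuclideanSpace ℝ (Fin d) => y l)
      (EuclideanSpace.proj l : EuclideanSpace ℝ (Fin d) →L[ℝ] ℝ) x := by
    simpa using (EuclideanSpace.proj (𝕜 := ℝ) l).hasFDerivAt
  have hmul := ((hp.const_mul (-2 * π)).mul (gauss_hasFDerivAt d x))
  rw [(show HasFDerivAt (fun y : EuclideanSpace ℝ (Fin d) => -2 * π * y l * gauss d y) _ x from hmul).fderiv]
  simp [EuclideanSpace.proj, real_inner_comm, EuclideanSpace.inner_single_left,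
    EuclideanSpace.inner_single_right, gauss]
  ring

lemma integrable_sq_exp {b : ℝ} (hb : 0 < b) :
    Integrable fun t : ℝ => t ^ 2 * Real.exp (-b * t ^ 2) := by
  have := integrable_rpow_mul_exp_neg_mul_sq hb (s := 2) (by norm_num)
  have e : ∀ t : ℝ, t ^ (2:ℝ) = t ^ (2:ℕ) := fun t => by
    rw [show ((2:ℝ)) = ((2:ℕ):ℝ) by norm_num, Real.rpow_natCast]
  simpa [e] using this

lemma integral_lin_gauss {b : ℝ} : ∫ t : ℝ, t * Real.exp (-b * t ^ 2) = 0 := by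
  have h := MeasureTheory.integral_neg_eq_self (fun t : ℝ => t * Real.exp (-b * t ^ 2)) volume
  simp only [neg_sq, neg_mul] at h
  rw [MeasureTheory.integral_neg] at h
  simp only [neg_mul]
  linarith

lemma integral_sq_gauss {b : ℝ} (hb : 0 < b) :
    ∫ t : ℝ, t ^ 2 * Real.exp (-b * t ^ 2) = Real.sqrt (π / b) / (2 * b) := by
  have e : ∀ t : ℝ, t ^ (2:ℝ) = t ^ (2:ℕ) := fun t => by
    rw [show ((2:ℝ)) = ((2:ℕ):ℝ) by norm_num, Real.rpow_natCast]
  have h1 : ∫ t : ℝ, t ^ 2 * Real.exp (-b * t ^ 2)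
      = 2 * ∫ t in Set.Ioi (0:ℝ), t ^ 2 * Real.exp (-b * t ^ 2) := by
    rw [← integral_comp_abs (f := fun t : ℝ => t ^ 2 * Real.exp (-b * t ^ 2))]
    congr 1; ext t; rw [sq_abs]
  have h2 : ∫ t in Set.Ioi (0:ℝ), t ^ 2 * Real.exp (-b * t ^ 2)
      = b ^ (-(2+1:ℝ) / 2) * (1 / 2) * Real.Gamma ((2 + 1) / 2) := by
    rw [← integral_rpow_mul_exp_neg_mul_rpow two_pos (by norm_num : (-1:ℝ) < 2) hb]
    exact setIntegral_congr_fun measurableSet_Ioi (fun t ht => by rw [e])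
  have h3 : Real.Gamma ((2 + 1) / 2) = Real.sqrt π / 2 := by
    rw [show ((2:ℝ)+1)/2 = 1/2 + 1 by norm_num, Real.Gamma_add_one (by norm_num),
      Real.Gamma_one_half_eq]
    ring
  have h4 : b ^ (-(2+1:ℝ) / 2) = 1 / (b * Real.sqrt b) := by
    rw [show (-(2+1:ℝ)/2) = -(1 + 1/2) by norm_num, Real.rpow_neg hb.le, Real.rpow_add hb,
      Real.rpow_one, ← Real.sqrt_eq_rpow, one_div]
  have h5 : Real.sqrt (π / b) = Real.sqrt π / Real.sqrt b := Real.sqrt_div pi_pos.le b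
  have hsb : (0:ℝ) < Real.sqrt b := Real.sqrt_pos.mpr hb
  rw [h1, h2, h3, h4, h5]
  field_simp

lemma integral_poly_gauss (b m a₀ a₁ a₂ : ℝ) (hb : 0 < b) :
    ∫ t : ℝ, (a₂ * (t - m) ^ 2 + a₁ * (t - m) + a₀) * Real.exp (-b * (t - m) ^ 2)
      = a₂ * (Real.sqrt (π / b) / (2 * b)) + a₀ * Real.sqrt (π / b) := by
  have h := MeasureTheory.integral_sub_right_eq_self (μ := volume)
    (fun t : ℝ => (a₂ * t ^ 2 + a₁ * t + a₀) * Real.exp (-b * t ^ 2)) m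
  rw [h]
  have i2 := (integrable_sq_exp hb).const_mul a₂
  have i1 := (integrable_mul_exp_neg_mul_sq hb).const_mul a₁
  have i0 := (integrable_exp_neg_mul_sq hb).const_mul a₀
  have : (fun t : ℝ => (a₂ * t ^ 2 + a₁ * t + a₀) * Real.exp (-b * t ^ 2))
      = fun t : ℝ => a₂ * (t ^ 2 * Real.exp (-b * t ^ 2)) + (a₁ * (t * Real.exp (-b * t ^ 2))
        + a₀ * Real.exp (-b * t ^ 2)) := by ext t; ring
  have i10 : Integrable (fun t : ℝ => a₁ * (t * Real.exp (-b * t ^ 2))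
      + a₀ * Real.exp (-b * t ^ 2)) volume := i1.add i0
  rw [this, integral_add i2 i10, integral_add i1 i0, integral_const_mul,
    integral_const_mul, integral_const_mul,
    integral_sq_gauss hb, integral_lin_gauss, integral_gaussian]
  ring

variable {α β : ℝ}

lemma exp_split (hα : 0 < α) (hβ : 0 < β) (c t : ℝ) :
    Real.exp (-(π / α ^ 2) * t ^ 2 - (π / β ^ 2) * (c - t) ^ 2)
      = Real.exp (-(π * (α ^ 2 + β ^ 2) / (α ^ 2 * β ^ 2))
          * (t - c * α ^ 2 / (α ^ 2 + β ^ 2)) ^ 2)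
        * Real.exp (-(π * c ^ 2 / (α ^ 2 + β ^ 2))) := by
  rw [← Real.exp_add]
  congr 1
  have h1 : α ^ 2 + β ^ 2 ≠ 0 := by positivity
  field_simp
  ring

lemma sqrt_pi_div_b (hα : 0 < α) (hβ : 0 < β) :
    Real.sqrt (π / (π * (α ^ 2 + β ^ 2) / (α ^ 2 * β ^ 2)))
      = Real.sqrt (α ^ 2 * β ^ 2 / (α ^ 2 + β ^ 2)) := by
  congr 1
  have h1 : α ^ 2 + β ^ 2 ≠ 0 := by positivity
  have := pi_ne_zero
  field_simp

lemma I0 (hα : 0 < α) (hβ : 0 < β) (c : ℝ) :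
    ∫ t : ℝ, Real.exp (-(π / α ^ 2) * t ^ 2 - (π / β ^ 2) * (c - t) ^ 2)
      = Real.sqrt (α ^ 2 * β ^ 2 / (α ^ 2 + β ^ 2)) * Real.exp (-(π * c ^ 2 / (α ^ 2 + β ^ 2))) := by
  have hb : 0 < π * (α ^ 2 + β ^ 2) / (α ^ 2 * β ^ 2) := by positivity
  simp_rw [exp_split hα hβ c]
  rw [integral_mul_const]
  have h := MeasureTheory.integral_sub_right_eq_self (μ := volume)
    (fun u : ℝ => Real.exp (-(π * (α ^ 2 + β ^ 2) / (α ^ 2 * β ^ 2)) * u ^ 2))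
    (c * α ^ 2 / (α ^ 2 + β ^ 2))
  rw [h, integral_gaussian, sqrt_pi_div_b hα hβ]

lemma I1 (hα : 0 < α) (hβ : 0 < β) (c : ℝ) :
    ∫ t : ℝ, (t * (c - t)) * Real.exp (-(π / α ^ 2) * t ^ 2 - (π / β ^ 2) * (c - t) ^ 2)
      = (c ^ 2 * α ^ 2 * β ^ 2 / (α ^ 2 + β ^ 2) ^ 2 - α ^ 2 * β ^ 2 / (2 * π * (α ^ 2 + β ^ 2)))
        * (Real.sqrt (α ^ 2 * β ^ 2 / (α ^ 2 + β ^ 2))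
            * Real.exp (-(π * c ^ 2 / (α ^ 2 + β ^ 2)))) := by
  have hb : 0 < π * (α ^ 2 + β ^ 2) / (α ^ 2 * β ^ 2) := by positivity
  set b := π * (α ^ 2 + β ^ 2) / (α ^ 2 * β ^ 2) with hbdef
  set m := c * α ^ 2 / (α ^ 2 + β ^ 2) with hmdef
  have key : ∀ t : ℝ, (t * (c - t)) * Real.exp (-(π / α ^ 2) * t ^ 2 - (π / β ^ 2) * (c - t) ^ 2)
      = (((-1) * (t - m) ^ 2 + (c - 2 * m) * (t - m) + m * (c - m)) * Real.exp (-b * (t - m) ^ 2))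
        * Real.exp (-(π * c ^ 2 / (α ^ 2 + β ^ 2))) := by
    intro t
    rw [exp_split hα hβ c t, ← hbdef, ← hmdef]
    ring
  simp_rw [key]
  rw [integral_mul_const, integral_poly_gauss b m (m * (c - m)) (c - 2 * m) (-1) hb,
    sqrt_pi_div_b hα hβ]
  have h1 : (α:ℝ) ^ 2 + β ^ 2 ≠ 0 := by positivity
  have h2 : π ≠ 0 := pi_ne_zero
  have hm : m * (c - m) = c ^ 2 * α ^ 2 * β ^ 2 / (α ^ 2 + β ^ 2) ^ 2 := by
    rw [hmdef]; field_simp; ring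
  have hb2 : (1:ℝ) / (2 * b) = α ^ 2 * β ^ 2 / (2 * π * (α ^ 2 + β ^ 2)) := by
    rw [hbdef]; field_simp
  rw [hm]
  rw [div_eq_mul_one_div (Real.sqrt (α ^ 2 * β ^ 2 / (α ^ 2 + β ^ 2))) (2*b), hb2]
  ring

lemma norm_sq_eq (d : ℕ) (y : EuclideanSpace ℝ (Fin d)) : ‖y‖ ^ 2 = ∑ i, (y i) ^ 2 := by
  rw [EuclideanSpace.norm_eq, Real.sq_sqrt (by positivity)]
  simp [sq_abs]

lemma conv_term (d : ℕ) {α β : ℝ} (hα : 0 < α) (hβ : 0 < β)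
    (x : EuclideanSpace ℝ (Fin d)) (l : Fin d) :
    ∫ y : EuclideanSpace ℝ (Fin d), dil d α (gaussD d l) y * dil d β (gaussD d l) (x - y)
      = (α ^ d)⁻¹ * (β ^ d)⁻¹ * (4 * π ^ 2 / (α * β))
        * (x l ^ 2 * α ^ 2 * β ^ 2 / (α ^ 2 + β ^ 2) ^ 2
            - α ^ 2 * β ^ 2 / (2 * π * (α ^ 2 + β ^ 2)))
        * Real.sqrt (α ^ 2 * β ^ 2 / (α ^ 2 + β ^ 2)) ^ d
        * Real.exp (∑ i, -(π * (x i) ^ 2 / (α ^ 2 + β ^ 2))) := by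
  have hα' : α ≠ 0 := hα.ne'
  have hβ' : β ≠ 0 := hβ.ne'
  set f : Fin d → ℝ → ℝ := fun i t =>
    if i = l then (t * (x i - t)) * Real.exp (-(π / α ^ 2) * t ^ 2 - (π / β ^ 2) * (x i - t) ^ 2)
    else Real.exp (-(π / α ^ 2) * t ^ 2 - (π / β ^ 2) * (x i - t) ^ 2) with hf
  have hC : ∀ y : EuclideanSpace ℝ (Fin d),
      dil d α (gaussD d l) y * dil d β (gaussD d l) (x - y)
        = ((α ^ d)⁻¹ * (β ^ d)⁻¹ * (4 * π ^ 2 / (α * β))) * ∏ i, f i (y i) := by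
    intro y
    have hprod : ∏ i, f i (y i) = (y l * (x l - y l))
        * Real.exp (∑ i, (-(π / α ^ 2) * (y i) ^ 2 - (π / β ^ 2) * (x i - y i) ^ 2)) := by
      rw [Real.exp_sum, ← Finset.mul_prod_erase Finset.univ (fun i => f i (y i))
          (Finset.mem_univ l),
        ← Finset.mul_prod_erase Finset.univ
          (fun i => Real.exp (-(π / α ^ 2) * (y i) ^ 2 - (π / β ^ 2) * (x i - y i) ^ 2))
          (Finset.mem_univ l)]
      have h1 : ∀ i ∈ Finset.univ.erase l, f i (y i)
          = Real.exp (-(π / α ^ 2) * (y i) ^ 2 - (π / β ^ 2) * (x i - y i) ^ 2) := by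
        intro i hi
        rw [hf]; simp only [Finset.ne_of_mem_erase hi, if_false]
      rw [Finset.prod_congr rfl h1, hf]
      simp only [if_pos]
      ring
    rw [hprod]
    have hsum : ∑ i, (-(π / α ^ 2) * (y i) ^ 2 - (π / β ^ 2) * (x i - y i) ^ 2)
        = -π * (α⁻¹ ^ 2 * ∑ i, (y i) ^ 2) + -π * (β⁻¹ ^ 2 * ∑ i, (x i - y i) ^ 2) := by
      rw [Finset.sum_sub_distrib, ← Finset.mul_sum, ← Finset.mul_sum]
      ring
    rw [hsum, Real.exp_add, dil, dil, gaussD_eq, gaussD_eq, gauss, gauss, norm_sq_eq, norm_sq_eq]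
    simp only [PiLp.smul_apply, PiLp.sub_apply, smul_eq_mul, mul_pow]
    rw [← Finset.mul_sum, ← Finset.mul_sum]
    ring
  simp_rw [hC]
  rw [integral_const_mul]
  have htrans : (∫ y : EuclideanSpace ℝ (Fin d), ∏ i, f i (y i))
      = ∫ z : Fin d → ℝ, ∏ i, f i (z i) := by
    rw [← ((EuclideanSpace.volume_preserving_symm_measurableEquiv_toLp (Fin d)).symm).integral_comp
      (MeasurableEquiv.measurableEmbedding _) (fun y : EuclideanSpace ℝ (Fin d) => ∏ i, f i (y i))]
    rfl
  rw [htrans, MeasureTheory.volume_pi, MeasureTheory.integral_fintype_prod_eq_prod (𝕜 := ℝ) (ι := Fin d) f]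
  have hfi : ∀ i, (∫ t, f i t)
      = (if i = l then (x i ^ 2 * α ^ 2 * β ^ 2 / (α ^ 2 + β ^ 2) ^ 2
          - α ^ 2 * β ^ 2 / (2 * π * (α ^ 2 + β ^ 2))) else 1)
        * (Real.sqrt (α ^ 2 * β ^ 2 / (α ^ 2 + β ^ 2))
            * Real.exp (-(π * (x i) ^ 2 / (α ^ 2 + β ^ 2)))) := by
    intro i
    by_cases hi : i = l
    · simp only [hf, if_pos hi]
      rw [I1 hα hβ]
    · simp only [hf, if_neg hi, one_mul]
      rw [I0 hα hβ]
  rw [Finset.prod_congr rfl (fun i _ => hfi i), Finset.prod_mul_distrib,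
    Finset.prod_ite_eq' Finset.univ l, Finset.prod_mul_distrib, Finset.prod_const,
    ← Real.exp_sum]
  simp only [Finset.mem_univ, if_true, Finset.card_univ, Fintype.card_fin]
  ring

/-- `∑_{l=1}^d h^{(l)}_α ∗ h^{(l)}_β = (αβ/(α²+β²)) k_{√(α²+β²)}`. -/
theorem gaussD_conv_gaussD (d : ℕ) (α β : ℝ) (hα : 0 < α) (hβ : 0 < β)
    (x : EuclideanSpace ℝ (Fin d)) :
    (∑ l : Fin d, ∫ y : EuclideanSpace ℝ (Fin d),
        dil d α (gaussD d l) y * dil d β (gaussD d l) (x - y)) =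
      α * β / (α ^ 2 + β ^ 2) * dil d (Real.sqrt (α ^ 2 + β ^ 2)) (gaussLap d) x := by
  have hα' : α ≠ 0 := hα.ne'
  have hβ' : β ≠ 0 := hβ.ne'
  have hπ : (π:ℝ) ≠ 0 := pi_ne_zero
  have hs2 : (0:ℝ) < α ^ 2 + β ^ 2 := by positivity
  set s := Real.sqrt (α ^ 2 + β ^ 2) with hs
  have hssq : s ^ 2 = α ^ 2 + β ^ 2 := Real.sq_sqrt hs2.le
  have hspos : 0 < s := Real.sqrt_pos.mpr hs2
  have hs' : s ≠ 0 := hspos.ne'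
  rw [Finset.sum_congr rfl (fun l _ => conv_term d hα hβ x l), dil, gaussLap_eq, gauss,
    norm_sq_eq]
  simp only [PiLp.smul_apply, smul_eq_mul]
  rw [Finset.mul_sum, Finset.mul_sum, Finset.mul_sum]
  refine Finset.sum_congr rfl fun l _ => ?_
  have hexp : Real.exp (∑ i, -π * (s⁻¹ * x i) ^ 2)
      = Real.exp (∑ i, -(π * (x i) ^ 2 / (α ^ 2 + β ^ 2))) := by
    congr 1
    refine Finset.sum_congr rfl fun i _ => ?_
    rw [mul_pow, ← hssq]
    field_simp
  rw [hexp]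
  have hsqrt : Real.sqrt (α ^ 2 * β ^ 2 / (α ^ 2 + β ^ 2)) = α * β / s := by
    rw [show α ^ 2 * β ^ 2 = (α * β) ^ 2 by ring, Real.sqrt_div (sq_nonneg _), ← hs,
      Real.sqrt_sq (by positivity : (0:ℝ) ≤ α * β)]
  have hsqrt' : Real.sqrt (α ^ 2 * β ^ 2 / (α ^ 2 + β ^ 2)) ^ d = α ^ d * β ^ d / s ^ d := by
    rw [hsqrt, div_pow, mul_pow]
  rw [hsqrt']
  have hxl : (s⁻¹ * x l) ^ 2 = (x l) ^ 2 / (α ^ 2 + β ^ 2) := by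
    rw [mul_pow, ← hssq]; field_simp
  rw [hxl, ← hssq]
  have hsd : (s:ℝ) ^ d ≠ 0 := pow_ne_zero d hs'
  have hαd : (α:ℝ) ^ d ≠ 0 := pow_ne_zero d hα'
  have hβd : (β:ℝ) ^ d ≠ 0 := pow_ne_zero d hβ'
  field_simp
  ring
end

section
/- There exists a constant C = C(d) > 0 such that for every x ∈ ℝ^d, (1+|x|)^{-d-1} ≤ C ∫_1^∞ g_γ(x) γ^{-2} dγ, where g_γ(x) = γ^{-d} exp(-π|x/γ|²). In words, the Schwartz tail (1+|x|)^{-d-1} is dominated by a superposition of dilated Gaussians. -/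
open Real MeasureTheory

/-- The Schwartz tail `(1+|x|)^{-d-1}` is dominated by a superposition of dilated
Gaussians: `(1+|x|)^{-d-1} ≤ C ∫_1^∞ g_γ(x) γ^{-2} dγ`. -/
theorem schwartz_tail_le_gaussian_superposition (d : ℕ) :
    ∃ C > (0 : ℝ), ∀ x : EuclideanSpace ℝ (Fin d),
      (1 + ‖x‖) ^ (-(d : ℝ) - 1) ≤
        C * ∫ γ in Set.Ioi (1 : ℝ), dil d γ (gauss d) x / γ ^ 2 := by
  refine ⟨Real.exp π * 2 ^ (d + 2), by positivity, fun x => ?_⟩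
  set R : ℝ := max 1 ‖x‖ with hRdef
  have hR1 : (1 : ℝ) ≤ R := le_max_left _ _
  have hR0 : (0 : ℝ) < R := lt_of_lt_of_le one_pos hR1
  have hxR : ‖x‖ ≤ R := le_max_right _ _
  set f : ℝ → ℝ := fun γ => dil d γ (gauss d) x / γ ^ 2 with hfdef
  have hf_eval : ∀ γ : ℝ, 0 < γ →
      f γ = (γ ^ (d + 2))⁻¹ * Real.exp (-π * (‖x‖ / γ) ^ 2) := by
    intro γ hγ
    simp only [hfdef, dil, gauss]
    rw [norm_smul, norm_inv, Real.norm_eq_abs, abs_of_pos hγ]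
    rw [pow_add]
    field_simp
  have hf_nonneg : ∀ γ : ℝ, 0 < γ → 0 ≤ f γ := by
    intro γ hγ
    rw [hf_eval γ hγ]
    positivity
  have hmeas : AEStronglyMeasurable f (volume.restrict (Set.Ioi (1 : ℝ))) := by
    apply Measurable.aestronglyMeasurable
    simp only [hfdef, dil, gauss]
    fun_prop
  have hint : IntegrableOn f (Set.Ioi (1 : ℝ)) := by
    refine Integrable.mono' (g := fun γ => γ ^ (-2 : ℝ))
      (integrableOn_Ioi_rpow_of_lt (by norm_num) one_pos) hmeas ?_
    filter_upwards [ae_restrict_mem measurableSet_Ioi] with γ hγ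
    have hγ1 : (1 : ℝ) < γ := hγ
    have hγ0 : (0 : ℝ) < γ := lt_trans one_pos hγ1
    rw [Real.norm_eq_abs, abs_of_nonneg (hf_nonneg γ hγ0), hf_eval γ hγ0,
      show (-2 : ℝ) = -((2 : ℕ) : ℝ) by norm_num, Real.rpow_neg hγ0.le,
      Real.rpow_natCast]
    calc (γ ^ (d + 2))⁻¹ * Real.exp (-π * (‖x‖ / γ) ^ 2)
        ≤ (γ ^ (d + 2))⁻¹ * 1 :=
          mul_le_mul_of_nonneg_left
            (Real.exp_le_one_iff.mpr (by nlinarith [Real.pi_pos, sq_nonneg (‖x‖ / γ)]))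
            (by positivity)
      _ ≤ (γ ^ 2)⁻¹ := by
          rw [mul_one]
          exact inv_anti₀ (by positivity) (pow_le_pow_right₀ hγ1.le (by omega))
  have hsub : Set.Ioc R (2 * R) ⊆ Set.Ioi (1 : ℝ) := fun γ hγ =>
    lt_of_le_of_lt hR1 hγ.1
  have hnonneg_ae : 0 ≤ᵐ[volume.restrict (Set.Ioi (1 : ℝ))] f := by
    filter_upwards [ae_restrict_mem measurableSet_Ioi] with γ hγ
    exact hf_nonneg γ (lt_trans one_pos hγ)
  have h1 : ∫ γ in Set.Ioc R (2 * R), f γ ≤ ∫ γ in Set.Ioi (1 : ℝ), f γ :=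
    setIntegral_mono_set hint hnonneg_ae (HasSubset.Subset.eventuallyLE hsub)
  have hconst : ∀ γ ∈ Set.Ioc R (2 * R),
      Real.exp (-π) * ((2 * R) ^ (d + 2))⁻¹ ≤ f γ := by
    intro γ hγ
    have hγ0 : (0 : ℝ) < γ := lt_of_lt_of_le hR0 hγ.1.le
    rw [hf_eval γ hγ0, mul_comm]
    have hq : (‖x‖ / γ) ^ 2 ≤ 1 := by
      have h1 : ‖x‖ / γ ≤ 1 := (div_le_one hγ0).mpr (hxR.trans hγ.1.le)
      have h2 : 0 ≤ ‖x‖ / γ := by positivity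
      nlinarith
    exact mul_le_mul (inv_anti₀ (by positivity) (pow_le_pow_left₀ hγ0.le hγ.2 _))
      (Real.exp_le_exp.mpr (by nlinarith [Real.pi_pos]))
      (Real.exp_pos _).le (by positivity)
  have h2 : Real.exp (-π) * ((2 * R) ^ (d + 2))⁻¹ * R ≤
      ∫ γ in Set.Ioc R (2 * R), f γ := by
    have hvol : (volume (Set.Ioc R (2 * R))).toReal = R := by
      rw [Real.volume_Ioc, ENNReal.toReal_ofReal (by linarith)]
      ring
    have := setIntegral_ge_of_const_le (c := Real.exp (-π) * ((2 * R) ^ (d + 2))⁻¹)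
      measurableSet_Ioc (by rw [Real.volume_Ioc]; exact ENNReal.ofReal_ne_top)
      hconst (hint.mono_set hsub)
    rw [measureReal_def, hvol, smul_eq_mul] at this
    linarith
  have hLHS : (1 + ‖x‖) ^ (-(d : ℝ) - 1) ≤
      Real.exp π * 2 ^ (d + 2) * (Real.exp (-π) * ((2 * R) ^ (d + 2))⁻¹ * R) := by
    have hRx : R ≤ 1 + ‖x‖ := max_le (by linarith [norm_nonneg x]) (by linarith)
    have step1 : (1 + ‖x‖) ^ (-(d : ℝ) - 1) ≤ R ^ (-(d : ℝ) - 1) :=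
      Real.rpow_le_rpow_of_nonpos hR0 hRx (by have : (0:ℝ) ≤ d := Nat.cast_nonneg d; linarith)
    have step2 : R ^ (-(d : ℝ) - 1) = (R ^ (d + 1))⁻¹ := by
      rw [show (-(d : ℝ) - 1) = -((d + 1 : ℕ) : ℝ) by push_cast; ring,
        Real.rpow_neg hR0.le, Real.rpow_natCast]
    have step3 : Real.exp π * 2 ^ (d + 2) * (Real.exp (-π) * ((2 * R) ^ (d + 2))⁻¹ * R)
        = (R ^ (d + 1))⁻¹ := by
      rw [Real.exp_neg, mul_pow, pow_succ R (d + 1)]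
      have h2R : (2 : ℝ) ^ (d + 2) ≠ 0 := by positivity
      have hRne : R ≠ 0 := hR0.ne'
      have hexp : Real.exp π ≠ 0 := (Real.exp_pos π).ne'
      field_simp
    rw [step2, ← step3] at step1
    exact step1
  calc (1 + ‖x‖) ^ (-(d : ℝ) - 1)
      ≤ Real.exp π * 2 ^ (d + 2) * (Real.exp (-π) * ((2 * R) ^ (d + 2))⁻¹ * R) := hLHS
    _ ≤ Real.exp π * 2 ^ (d + 2) * ∫ γ in Set.Ioi (1 : ℝ), f γ :=
        mul_le_mul_of_nonneg_left (h2.trans h1) (by positivity)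
end

section
/- Let (Ω, F, P) be a probability space with a filtration G₀ ⊆ G₁ ⊆ G₂ ⊆ ⋯ ⊆ F, and write E_m f := E(f | G_m). Let f be a nonnegative bounded measurable function and let m, m₁, …, m_n be nonnegative integers with m ≤ min{m₁,…,m_n}. Then E_m( f · (E_{m₁}f) · (E_{m₂}f) ⋯ (E_{m_n}f) ) ≥ (E_m f)^{n+1} almost surely. -/
open MeasureTheory

lemma tangent_pow_aux (p : ℕ) (a b : ℝ) (ha : 0 ≤ a) (hb : 0 ≤ b) :
    b ^ (p + 1) + ((p : ℝ) + 1) * b ^ p * (a - b) ≤ a ^ (p + 1) := by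
  induction p with
  | zero => norm_num
  | succ k ih =>
      have h1 : a * (b ^ (k + 1) + ((k : ℝ) + 1) * b ^ k * (a - b)) ≤ a * a ^ (k + 1) :=
        mul_le_mul_of_nonneg_left ih ha
      have h2 : (0:ℝ) ≤ ((k : ℝ) + 1) * (b ^ k * (a - b) ^ 2) :=
        mul_nonneg (by positivity) (mul_nonneg (pow_nonneg hb k) (sq_nonneg _))
      have hb1 : b ^ (k + 1) = b ^ k * b := pow_succ b k
      have ha1 : a ^ (k + 1 + 1) = a * a ^ (k + 1) := by rw [pow_succ]; ring
      rw [ha1, show (k:ℕ) + 1 + 1 = k + 2 from rfl, show b ^ (k+2) = b ^ k * b * b by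
        rw [pow_succ, pow_succ]]
      rw [hb1] at h1 ⊢
      push_cast
      nlinarith [h1, h2]

section Aux

variable {Ω : Type*} {m0 : MeasurableSpace Ω}
    (μ : Measure Ω) (𝒢 : Filtration ℕ m0) (f : Ω → ℝ)

/-- Product of conditional expectations along a list of times. -/
noncomputable def condexpListProd (l : List ℕ) (ω : Ω) : ℝ :=
  (l.map fun j => (μ[f|𝒢 j]) ω).prod

@[simp] lemma condexpListProd_nil (ω : Ω) : condexpListProd μ 𝒢 f [] ω = 1 := rfl

@[simp] lemma condexpListProd_cons (j : ℕ) (l : List ℕ) (ω : Ω) :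
    condexpListProd μ 𝒢 f (j :: l) ω = (μ[f|𝒢 j]) ω * condexpListProd μ 𝒢 f l ω := by
  simp [condexpListProd]

lemma condexpListProd_meas (l : List ℕ) (k : ℕ) (hl : ∀ j ∈ l, j ≤ k) :
    StronglyMeasurable[𝒢 k] (condexpListProd μ 𝒢 f l) := by
  induction l with
  | nil => exact stronglyMeasurable_const
  | cons j l ih =>
      have h1 : StronglyMeasurable[𝒢 k] (μ[f|𝒢 j]) :=
        stronglyMeasurable_condExp.mono (𝒢.mono (hl j (List.mem_cons_self)))
      have h2 := ih fun j hj => hl j (List.mem_cons_of_mem _ hj)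
      exact h1.mul h2

end Aux

/-- For a filtration `(G_m)` and nonnegative bounded measurable `f`, if
`m ≤ min{m₁,…,m_n}` then
`E_m( f · (E_{m₁}f) ⋯ (E_{m_n}f) ) ≥ (E_m f)^{n+1}` a.s. -/
theorem condexp_product_lower_bound {Ω : Type*} {m0 : MeasurableSpace Ω}
    (μ : Measure Ω) [IsProbabilityMeasure μ] (𝒢 : Filtration ℕ m0)
    (f : Ω → ℝ) (hmeas : Measurable f) (hnonneg : ∀ ω, 0 ≤ f ω)
    (hbdd : ∃ C : ℝ, ∀ ω, f ω ≤ C)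
    (n : ℕ) (m : ℕ) (ms : Fin n → ℕ) (hm : ∀ i, m ≤ ms i) :
    ∀ᵐ ω ∂μ,
      (μ[f|𝒢 m]) ω ^ (n + 1) ≤
        (μ[fun ω' => f ω' * ∏ i : Fin n, (μ[f|𝒢 (ms i)]) ω' | 𝒢 m]) ω := by
  classical
  obtain ⟨C, hC⟩ := hbdd
  set D : ℝ := max C 0 with hD
  have hD0 : 0 ≤ D := le_max_right _ _
  have hfD : ∀ ω, f ω ≤ D := fun ω => (hC ω).trans (le_max_left _ _)
  set g : ℕ → Ω → ℝ := fun k => μ[f|𝒢 k] with hgdef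
  set P : List ℕ → Ω → ℝ := condexpListProd μ 𝒢 f with hPdef
  -- basic facts
  have hf_int : Integrable f μ := by
    refine Integrable.mono' (integrable_const D) hmeas.aestronglyMeasurable ?_
    exact Filter.Eventually.of_forall fun ω => by
      rw [Real.norm_eq_abs, abs_of_nonneg (hnonneg ω)]; exact hfD ω
  have hg_nonneg : ∀ k, ∀ᵐ ω ∂μ, 0 ≤ g k ω := fun k =>
    condExp_nonneg (Filter.Eventually.of_forall hnonneg)
  have hg_le : ∀ k, ∀ᵐ ω ∂μ, g k ω ≤ D := by
    intro k
    have h := condExp_mono (m := 𝒢 k) hf_int (integrable_const D)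
      (Filter.Eventually.of_forall hfD)
    rw [condExp_const (𝒢.le k)] at h
    exact h
  have hg_meas : ∀ k, StronglyMeasurable[𝒢 k] (g k) := fun k => stronglyMeasurable_condExp
  have hg_meas0 : ∀ k, Measurable (g k) := fun k =>
    ((hg_meas k).mono (𝒢.le k)).measurable
  have hg_int : ∀ k, Integrable (g k) μ := fun k => integrable_condExp
  -- bounds on P
  have hP_bdd : ∀ l : List ℕ, ∀ᵐ ω ∂μ, 0 ≤ P l ω ∧ P l ω ≤ D ^ l.length := by
    intro l
    induction l with
    | nil => exact Filter.Eventually.of_forall fun ω => by simp [hPdef]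
    | cons j l ih =>
        filter_upwards [ih, hg_nonneg j, hg_le j] with ω h1 h3 h4
        rw [hPdef, condexpListProd_cons]
        constructor
        · exact mul_nonneg h3 h1.1
        · rw [List.length_cons, pow_succ, mul_comm (D ^ l.length) D]
          exact mul_le_mul h4 h1.2 h1.1 hD0
  have hP_meas0 : ∀ l : List ℕ, Measurable (P l) := by
    intro l
    induction l with
    | nil => exact measurable_const
    | cons j l ih =>
        have : P (j :: l) = fun ω => g j ω * P l ω := by
          funext ω; rw [hPdef, condexpListProd_cons]
        rw [this]; exact (hg_meas0 j).mul ih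
  -- generic integrability from a.e. bounds
  have int_of : ∀ (h : Ω → ℝ) (D' : ℝ), Measurable h →
      (∀ᵐ ω ∂μ, 0 ≤ h ω ∧ h ω ≤ D') → Integrable h μ := by
    intro h D' hme hb
    refine Integrable.mono' (integrable_const D') hme.aestronglyMeasurable ?_
    filter_upwards [hb] with ω hω
    rw [Real.norm_eq_abs, abs_of_nonneg hω.1]; exact hω.2
  have hgp_bdd : ∀ (k q : ℕ), ∀ᵐ ω ∂μ, 0 ≤ g k ω ^ q ∧ g k ω ^ q ≤ D ^ q := by
    intro k q
    filter_upwards [hg_nonneg k, hg_le k] with ω h1 h2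
    exact ⟨pow_nonneg h1 q, pow_le_pow_left₀ h1 h2 q⟩
  have key_int : ∀ (k q : ℕ) (l : List ℕ),
      Integrable (fun ω => g k ω ^ q * P l ω) μ := by
    intro k q l
    refine int_of _ (D ^ q * D ^ l.length) (((hg_meas0 k).pow_const q).mul (hP_meas0 l)) ?_
    filter_upwards [hgp_bdd k q, hP_bdd l] with ω h1 h2
    exact ⟨mul_nonneg h1.1 h2.1, mul_le_mul h1.2 h2.2 h2.1 (by positivity)⟩
  have fP_int : ∀ l : List ℕ, Integrable (fun ω => f ω * P l ω) μ := by
    intro l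
    refine int_of _ (D * D ^ l.length) (hmeas.mul (hP_meas0 l)) ?_
    filter_upwards [hP_bdd l] with ω h2
    exact ⟨mul_nonneg (hnonneg ω) h2.1,
      mul_le_mul (hfD ω) h2.2 h2.1 hD0⟩
  -- conditional Jensen for powers, via the tangent line trick
  have jensen : ∀ (j k p : ℕ), j ≤ k →
      ∀ᵐ ω ∂μ, g j ω ^ (p + 1) ≤ (μ[fun ω' => g k ω' ^ (p + 1)|𝒢 j]) ω := by
    intro j k p hjk
    have htower : μ[g k|𝒢 j] =ᵐ[μ] g j := condExp_condExp_of_le (𝒢.mono hjk) (𝒢.le k)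
    set b : Ω → ℝ := g j with hb
    set X : Ω → ℝ := g k with hX
    set h₁ : Ω → ℝ := fun ω => (((p : ℝ) + 1) * b ω ^ p) * X ω with hh₁
    set h₂ : Ω → ℝ := fun ω => (1 - ((p : ℝ) + 1)) * b ω ^ (p + 1) with hh₂
    have hb_sm : StronglyMeasurable[𝒢 j] b := hg_meas j
    have h₁_int : Integrable h₁ μ := by
      refine Integrable.mono' (integrable_const ((((p : ℝ) + 1) * D ^ p) * D)) ?_ ?_
      · exact ((measurable_const.mul ((hg_meas0 j).pow_const p)).mul
          (hg_meas0 k)).aestronglyMeasurable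
      · filter_upwards [hgp_bdd j p, hg_nonneg k, hg_le k] with ω w1 w2 w3
        rw [hh₁, Real.norm_eq_abs]
        rw [abs_of_nonneg (mul_nonneg (mul_nonneg (by positivity) w1.1) w2)]
        have : ((p : ℝ) + 1) * b ω ^ p ≤ ((p : ℝ) + 1) * D ^ p :=
          mul_le_mul_of_nonneg_left w1.2 (by positivity)
        exact mul_le_mul this w3 w2 (by positivity)
    have h₂_int : Integrable h₂ μ := by
      refine Integrable.mono' (integrable_const (((p : ℝ) + 1) * D ^ (p + 1))) ?_ ?_
      · exact (measurable_const.mul ((hg_meas0 j).pow_const (p + 1))).aestronglyMeasurable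
      · filter_upwards [hgp_bdd j (p + 1)] with ω w1
        rw [hh₂, Real.norm_eq_abs, abs_mul]
        have e1 : |1 - ((p : ℝ) + 1)| = (p : ℝ) := by
          rw [abs_of_nonpos (by push_cast; linarith)]; push_cast; ring
        rw [e1, abs_of_nonneg w1.1]
        have : (p : ℝ) ≤ (p : ℝ) + 1 := by linarith
        exact mul_le_mul this w1.2 w1.1 (by positivity)
    have hXp_int : Integrable (fun ω => X ω ^ (p + 1)) μ := by
      simpa [hX, hPdef] using key_int k (p + 1) []
    -- tangent line inequality pointwise a.e.
    have htang : ∀ᵐ ω ∂μ, (h₁ + h₂) ω ≤ X ω ^ (p + 1) := by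
      filter_upwards [hg_nonneg j, hg_nonneg k] with ω w1 w2
      have := tangent_pow_aux p (X ω) (b ω) w2 w1
      have expand : (h₁ + h₂) ω
          = b ω ^ (p + 1) + ((p : ℝ) + 1) * b ω ^ p * (X ω - b ω) := by
        simp only [Pi.add_apply, hh₁, hh₂]
        ring
      rw [expand]; exact this
    have hmono := condExp_mono (m := 𝒢 j) (h₁_int.add h₂_int) hXp_int htang
    have hadd := condExp_add (m := 𝒢 j) h₁_int h₂_int
    -- pull-out for h₁
    have hpull : μ[h₁|𝒢 j] =ᵐ[μ] fun ω => (((p : ℝ) + 1) * b ω ^ p) * g j ω := by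
      have hsm : StronglyMeasurable[𝒢 j] (fun ω => ((p : ℝ) + 1) * b ω ^ p) :=
        (measurable_const.mul ((hb_sm.measurable).pow_const p)).stronglyMeasurable
      have := condExp_mul_of_stronglyMeasurable_left (μ := μ) hsm
        (by exact h₁_int) (hg_int k)
      refine this.trans ?_
      filter_upwards [htower] with ω hω
      simp only [Pi.mul_apply]
      rw [hω]
    have hkeep : μ[h₂|𝒢 j] =ᵐ[μ] h₂ := by
      rw [condExp_of_stronglyMeasurable (𝒢.le j) (f := h₂)
        ((measurable_const.mul ((hb_sm.measurable).pow_const (p + 1))).stronglyMeasurable)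
        h₂_int]
    filter_upwards [hmono, hadd, hpull, hkeep, hg_nonneg j] with ω w1 w2 w3 w4 w5
    have : (μ[h₁ + h₂|𝒢 j]) ω = (((p : ℝ) + 1) * b ω ^ p) * b ω
        + (1 - ((p : ℝ) + 1)) * b ω ^ (p + 1) := by
      rw [w2]; simp only [Pi.add_apply]; rw [w3, w4]
    have hbb : b ω ^ p * b ω = b ω ^ (p + 1) := (pow_succ (b ω) p).symm
    have : (μ[h₁ + h₂|𝒢 j]) ω = b ω ^ (p + 1) := by
      rw [this]; nlinarith [hbb]
    calc g j ω ^ (p + 1) = (μ[h₁ + h₂|𝒢 j]) ω := by rw [this]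
      _ ≤ (μ[fun ω' => X ω' ^ (p + 1)|𝒢 j]) ω := w1
  -- main induction over sorted (descending) lists
  have step : ∀ l : List ℕ, ∀ k p : ℕ, m ≤ k → (∀ j ∈ l, m ≤ j) → (∀ j ∈ l, j ≤ k) →
      List.Pairwise (· ≥ ·) l →
      ∀ᵐ ω ∂μ, g m ω ^ (p + 1 + l.length) ≤
        (μ[fun ω' => g k ω' ^ (p + 1) * P l ω'|𝒢 m]) ω := by
    intro l
    induction l with
    | nil =>
        intro k p hmk _ _ _
        have : (fun ω' => g k ω' ^ (p + 1) * P [] ω') = fun ω' => g k ω' ^ (p + 1) := by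
          funext ω; simp [hPdef]
        rw [this]
        simpa using jensen m k p hmk
    | cons k' l' ih =>
        intro k p hmk hml hlk hsort
        obtain ⟨hhead, htail⟩ := List.pairwise_cons.mp hsort
        have hk'k : k' ≤ k := hlk k' (List.mem_cons_self)
        have hl'k' : ∀ j ∈ l', j ≤ k' := fun j hj => hhead j hj
        have hml' : ∀ j ∈ l', m ≤ j := fun j hj => hml j (List.mem_cons_of_mem _ hj)
        have hmk' : m ≤ k' := hml k' (List.mem_cons_self)
        set A : Ω → ℝ := fun ω => g k ω ^ (p + 1) with hA
        set B : Ω → ℝ := P (k' :: l') with hB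
        have hAB_eq : (fun ω' => g k ω' ^ (p + 1) * P (k' :: l') ω') = fun ω => B ω * A ω := by
          funext ω; rw [hB, hA]; ring
        have hB_sm : StronglyMeasurable[𝒢 k'] B := by
          rw [hB, hPdef]
          exact condexpListProd_meas μ 𝒢 f (k' :: l') k'
            (by intro j hj; rcases List.mem_cons.mp hj with h | h
                · omega
                · exact hl'k' j h)
        have hBA_int : Integrable (fun ω => B ω * A ω) μ := by
          rw [← hAB_eq]; exact key_int k (p + 1) (k' :: l')
        have hA_int : Integrable A μ := by simpa [hA, hPdef] using key_int k (p + 1) []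
        -- tower + pull-out
        have c1 : μ[fun ω => B ω * A ω|𝒢 m] =ᵐ[μ] μ[μ[fun ω => B ω * A ω|𝒢 k']|𝒢 m] :=
          (condExp_condExp_of_le (𝒢.mono hmk') (𝒢.le k')).symm
        have c2 : μ[fun ω => B ω * A ω|𝒢 k'] =ᵐ[μ] fun ω => B ω * (μ[A|𝒢 k']) ω := by
          have := condExp_mul_of_stronglyMeasurable_left (μ := μ) hB_sm hBA_int hA_int
          exact this
        have c3 := jensen k' k p hk'k
        -- the inner condexp dominates (g k')^(p+2) * P l'
        have c4 : ∀ᵐ ω ∂μ, g k' ω ^ (p + 1 + 1) * P l' ω ≤ (μ[fun ω => B ω * A ω|𝒢 k']) ω := by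
          filter_upwards [c2, c3, hP_bdd (k' :: l'), hP_bdd l'] with ω w2 w3 w4 w5
          rw [w2]
          have hBval : B ω = g k' ω * P l' ω := by rw [hB, hPdef, condexpListProd_cons]
          have : g k' ω ^ (p + 1 + 1) * P l' ω = B ω * (g k' ω ^ (p + 1)) := by
            rw [hBval]; ring
          rw [this]
          have hB0 : 0 ≤ B ω := by rw [hB]; exact w4.1
          exact mul_le_mul_of_nonneg_left w3 hB0
        have hRHS_int : Integrable (fun ω => g k' ω ^ (p + 1 + 1) * P l' ω) μ :=
          key_int k' (p + 1 + 1) l'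
        have c5 := condExp_mono (m := 𝒢 m) hRHS_int integrable_condExp c4
        have c6 := ih k' (p + 1) hmk' hml' hl'k' htail
        rw [hAB_eq]
        filter_upwards [c1, c5, c6] with ω w1 w5 w6
        rw [w1]
        calc g m ω ^ (p + 1 + (k' :: l').length)
            = g m ω ^ (p + 1 + 1 + l'.length) := by
              congr 1; simp [List.length_cons]; omega
          _ ≤ (μ[fun ω => g k' ω ^ (p + 1 + 1) * P l' ω|𝒢 m]) ω := w6
          _ ≤ (μ[μ[fun ω => B ω * A ω|𝒢 k']|𝒢 m]) ω := w5
  -- sort the indices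
  set l : List ℕ := List.insertionSort (· ≥ ·) (List.ofFn ms) with hl
  have hperm : l.Perm (List.ofFn ms) := List.perm_insertionSort _ _
  have hsort : List.Pairwise (· ≥ ·) l := List.pairwise_insertionSort _ _
  have hlen : l.length = n := by rw [hperm.length_eq, List.length_ofFn]
  have hmem : ∀ j ∈ l, m ≤ j := by
    intro j hj
    have : j ∈ List.ofFn ms := hperm.mem_iff.mp hj
    obtain ⟨i, hi⟩ := List.mem_ofFn.mp this
    exact hi ▸ hm i
  have hprod : ∀ ω, (∏ i : Fin n, (μ[f|𝒢 (ms i)]) ω) = P l ω := by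
    intro ω
    rw [hPdef]
    show _ = condexpListProd μ 𝒢 f l ω
    rw [condexpListProd]
    have : (l.map fun j => (μ[f|𝒢 j]) ω).prod
        = ((List.ofFn ms).map fun j => (μ[f|𝒢 j]) ω).prod :=
      (hperm.map _).prod_eq
    rw [this, List.map_ofFn, List.prod_ofFn]
    rfl
  have hfun : (fun ω' => f ω' * ∏ i : Fin n, (μ[f|𝒢 (ms i)]) ω')
      = fun ω' => f ω' * P l ω' := by
    funext ω; rw [hprod ω]
  rw [hfun]
  rcases l with _ | ⟨k, rest⟩
  · -- n = 0
    have hn : n = 0 := by simpa using hlen.symm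
    subst hn
    have : (fun ω' => f ω' * P [] ω') = f := by funext ω; simp [hPdef]
    rw [this]
    filter_upwards with ω
    rw [pow_one]
  · -- n ≥ 1
    obtain ⟨hhead, htail⟩ := List.pairwise_cons.mp hsort
    have hmk : m ≤ k := hmem k (List.mem_cons_self)
    have hallk : ∀ j ∈ (k :: rest), j ≤ k := by
      intro j hj; rcases List.mem_cons.mp hj with h | h
      · omega
      · exact hhead j h
    have hB_sm : StronglyMeasurable[𝒢 k] (P (k :: rest)) := by
      rw [hPdef]; exact condexpListProd_meas μ 𝒢 f _ k hallk
    have hfP_int := fP_int (k :: rest)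
    have hPf_int : Integrable (fun ω => P (k :: rest) ω * f ω) μ := by
      have : (fun ω => P (k :: rest) ω * f ω) = fun ω => f ω * P (k :: rest) ω := by
        funext ω; ring
      rw [this]; exact hfP_int
    have d0 : (fun ω' => f ω' * P (k :: rest) ω') = fun ω => P (k :: rest) ω * f ω := by
      funext ω; ring
    have d2 : μ[fun ω => P (k :: rest) ω * f ω|𝒢 k]
        =ᵐ[μ] fun ω => P (k :: rest) ω * g k ω :=
      condExp_mul_of_stronglyMeasurable_left (μ := μ) hB_sm hPf_int hf_int
    have d1 : μ[fun ω => P (k :: rest) ω * f ω|𝒢 m]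
        =ᵐ[μ] μ[μ[fun ω => P (k :: rest) ω * f ω|𝒢 k]|𝒢 m] :=
      (condExp_condExp_of_le (𝒢.mono hmk) (𝒢.le k)).symm
    have d3 : ∀ᵐ ω ∂μ, g k ω ^ (1 + 1) * P rest ω
        ≤ (μ[fun ω => P (k :: rest) ω * f ω|𝒢 k]) ω := by
      filter_upwards [d2] with ω w2
      rw [w2]
      have : P (k :: rest) ω = g k ω * P rest ω := by rw [hPdef, condexpListProd_cons]
      rw [this]; ring_nf; exact le_refl _
    have hRHS_int : Integrable (fun ω => g k ω ^ (1 + 1) * P rest ω) μ :=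
      key_int k (1 + 1) rest
    have d4 := condExp_mono (m := 𝒢 m) hRHS_int integrable_condExp d3
    have d5 := step rest k 1 hmk (fun j hj => hmem j (List.mem_cons_of_mem _ hj))
      (fun j hj => hhead j hj) htail
    rw [d0]
    filter_upwards [d1, d4, d5] with ω w1 w4 w5
    rw [w1]
    calc g m ω ^ (n + 1) = g m ω ^ (1 + 1 + rest.length) := by
          congr 1
          have : rest.length + 1 = n := by simpa using hlen
          omega
      _ ≤ (μ[fun ω => g k ω ^ (1 + 1) * P rest ω|𝒢 m]) ω := w5
      _ ≤ (μ[μ[fun ω => P (k :: rest) ω * f ω|𝒢 k]|𝒢 m]) ω := w4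
end

section
/- Let (Ω, F, P) be a probability space with a filtration (G_m)_{m≥0}, E_m f := E(f|G_m). For any nonnegative bounded measurable f and nonnegative integers m₁, …, m_n, E( f · (E_{m₁}f) ⋯ (E_{m_n}f) ) ≥ (E f)^{n+1}. -/
open MeasureTheory

private lemma tangent_pow (k : ℕ) {a b : ℝ} (ha : 0 ≤ a) (hb : 0 ≤ b) :
    ((k : ℝ) + 1) * b ^ k * a - (k : ℝ) * b ^ (k + 1) ≤ a ^ (k + 1) := by
  induction k with
  | zero => simp
  | succ k ih =>
    have h1 : (((k : ℝ) + 1) * b ^ k * a - (k : ℝ) * b ^ (k + 1)) * a ≤ a ^ (k + 1) * a :=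
      mul_le_mul_of_nonneg_right ih ha
    have h2 : 0 ≤ b ^ k * (a - b) ^ 2 := mul_nonneg (pow_nonneg hb k) (sq_nonneg _)
    have hk : (0 : ℝ) ≤ k := Nat.cast_nonneg k
    have e2 : b ^ (k + 1) = b ^ k * b := pow_succ b k
    rw [e2] at ih h1
    rw [pow_succ a (k + 1), pow_succ b (k + 1), e2]
    push_cast
    nlinarith [h1, h2, mul_nonneg hk h2]

private lemma pullout {Ω : Type*} {m0 : MeasurableSpace Ω} (μ : Measure Ω)
    [IsProbabilityMeasure μ] {m : MeasurableSpace Ω} (hm : m ≤ m0) {G X : Ω → ℝ}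
    (hG : StronglyMeasurable[m] G)
    (hX : Integrable X μ) (hGX : Integrable (fun ω => G ω * X ω) μ) :
    ∫ ω, G ω * X ω ∂μ = ∫ ω, G ω * (μ[X|m]) ω ∂μ := by
  have h1 : μ[G * X|m] =ᵐ[μ] G * μ[X|m] :=
    condExp_mul_of_stronglyMeasurable_left hG hGX hX
  have h0 : (fun ω => G ω * X ω) = G * X := rfl
  calc ∫ ω, G ω * X ω ∂μ = ∫ ω, (μ[G * X|m]) ω ∂μ := by
        rw [h0]; exact (integral_condExp (m₀ := m0) (μ := μ) (f := G * X) hm).symm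
    _ = ∫ ω, G ω * (μ[X|m]) ω ∂μ := integral_congr_ae (by
        filter_upwards [h1] with ω hω using hω)

private lemma integrable_of_bdd {Ω : Type*} {m0 : MeasurableSpace Ω} {μ : Measure Ω}
    [IsFiniteMeasure μ] {h : Ω → ℝ} (C : ℝ)
    (hm : AEStronglyMeasurable h μ) (hb : ∀ᵐ ω ∂μ, |h ω| ≤ C) : Integrable h μ :=
  Integrable.mono' (integrable_const C) hm (by simpa [Real.norm_eq_abs] using hb)

private lemma le_foldr_max : ∀ (l : List ℕ), ∀ x ∈ l, x ≤ l.foldr max 0 := by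
  intro l
  induction l with
  | nil => intro x hx; simp at hx
  | cons a t ih =>
    intro x hx
    rcases List.mem_cons.mp hx with h | h
    · subst h; exact le_max_left _ _
    · exact le_trans (ih x h) (le_max_right _ _)

private lemma prod_props {Ω : Type*} {m0 : MeasurableSpace Ω} (μ : Measure Ω)
    [IsProbabilityMeasure μ]
    (𝒢 : Filtration ℕ m0) (f : Ω → ℝ) (hmeas : Measurable f) (hnonneg : ∀ ω, 0 ≤ f ω)
    {C : ℝ} (hbddC : ∀ ω, f ω ≤ C) (hC : 0 ≤ C) :
    ∀ (l : List ℕ) (b : ℕ), (∀ m' ∈ l, m' ≤ b) →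
      StronglyMeasurable[𝒢 b] (fun ω => (l.map (fun m' => (μ[f|𝒢 m']) ω)).prod) ∧
      ∀ᵐ ω ∂μ, 0 ≤ (l.map (fun m' => (μ[f|𝒢 m']) ω)).prod ∧
               (l.map (fun m' => (μ[f|𝒢 m']) ω)).prod ≤ C ^ l.length := by
  have hfint : Integrable f μ := by
    refine Integrable.mono' (integrable_const C) hmeas.aestronglyMeasurable ?_
    exact ae_of_all _ fun ω => by
      rw [Real.norm_eq_abs, abs_of_nonneg (hnonneg ω)]; exact hbddC ω
  have hg0 : ∀ m : ℕ, 0 ≤ᵐ[μ] μ[f|𝒢 m] := fun m => condExp_nonneg (ae_of_all _ hnonneg)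
  have hgC : ∀ m : ℕ, ∀ᵐ ω ∂μ, (μ[f|𝒢 m]) ω ≤ C := by
    intro m
    have h1 : μ[f|𝒢 m] ≤ᵐ[μ] μ[(fun _ => C)|𝒢 m] :=
      condExp_mono hfint (integrable_const C) (ae_of_all _ hbddC)
    have h2 : μ[(fun _ => C)|𝒢 m] = fun _ => C := condExp_const (𝒢.le m) C
    filter_upwards [h1] with ω hω
    rw [h2] at hω; exact hω
  intro l
  induction l with
  | nil =>
    intro b _
    refine ⟨stronglyMeasurable_const, ae_of_all _ fun ω => ?_⟩
    simp
  | cons a t ih =>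
    intro b hb
    have hab : a ≤ b := hb a List.mem_cons_self
    have htb : ∀ m' ∈ t, m' ≤ b := fun m' hm' => hb m' (List.mem_cons_of_mem a hm')
    obtain ⟨ihm, ihb⟩ := ih b htb
    constructor
    · simp only [List.map_cons, List.prod_cons]
      exact (stronglyMeasurable_condExp.mono (𝒢.mono hab)).mul ihm
    · filter_upwards [ihb, hg0 a, hgC a] with ω h1 h2 h3
      simp only [List.map_cons, List.prod_cons, List.length_cons]
      constructor
      · exact mul_nonneg h2 h1.1
      · calc (μ[f|𝒢 a]) ω * (t.map (fun m' => (μ[f|𝒢 m']) ω)).prod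
            ≤ C * C ^ t.length := mul_le_mul h3 h1.2 h1.1 hC
          _ = C ^ (t.length + 1) := (pow_succ' C t.length).symm

private lemma key_claim {Ω : Type*} {m0 : MeasurableSpace Ω} (μ : Measure Ω)
    [IsProbabilityMeasure μ]
    (𝒢 : Filtration ℕ m0) (f : Ω → ℝ) (hmeas : Measurable f) (hnonneg : ∀ ω, 0 ≤ f ω)
    {C : ℝ} (hbddC : ∀ ω, f ω ≤ C) (hC : 0 ≤ C) :
    ∀ (l : List ℕ), l.Pairwise (· ≥ ·) → ∀ (m k : ℕ), (∀ m' ∈ l, m' ≤ m) →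
    (∫ ω, f ω ∂μ) ^ (k + 1 + l.length) ≤
      ∫ ω, (μ[f|𝒢 m]) ω ^ (k + 1) * (l.map (fun m' => (μ[f|𝒢 m']) ω)).prod ∂μ := by
  have hfint : Integrable f μ := by
    refine Integrable.mono' (integrable_const C) hmeas.aestronglyMeasurable ?_
    exact ae_of_all _ fun ω => by
      rw [Real.norm_eq_abs, abs_of_nonneg (hnonneg ω)]; exact hbddC ω
  have hg0 : ∀ m : ℕ, 0 ≤ᵐ[μ] μ[f|𝒢 m] := fun m => condExp_nonneg (ae_of_all _ hnonneg)
  have hrep : ∀ (j m' : ℕ) (ω : Ω),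
      ((List.replicate j m').map (fun m'' => (μ[f|𝒢 m'']) ω)).prod = (μ[f|𝒢 m']) ω ^ j := by
    intro j m' ω
    simp [List.map_replicate, List.prod_replicate]
  have hQint : ∀ l' : List ℕ,
      Integrable (fun ω => (l'.map (fun m' => (μ[f|𝒢 m']) ω)).prod) μ := by
    intro l'
    obtain ⟨hsm, hb⟩ := prod_props μ 𝒢 f hmeas hnonneg hbddC hC l' (l'.foldr max 0)
      (le_foldr_max l')
    refine integrable_of_bdd (C ^ l'.length) ((hsm.mono (𝒢.le _)).aestronglyMeasurable) ?_
    filter_upwards [hb] with ω h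
    rw [abs_of_nonneg h.1]; exact h.2
  intro l
  induction l with
  | nil =>
    intro _ m k _
    simp only [List.map_nil, List.prod_nil, mul_one, List.length_nil, Nat.add_zero]
    set b := ∫ ω, f ω ∂μ with hbdef
    have hbeq : ∫ ω, (μ[f|𝒢 m]) ω ∂μ = b := integral_condExp (𝒢.le m)
    have hb0 : 0 ≤ b := integral_nonneg hnonneg
    have hInt1 : Integrable (fun ω => ((k : ℝ) + 1) * b ^ k * (μ[f|𝒢 m]) ω
        - (k : ℝ) * b ^ (k + 1)) μ :=
      (integrable_condExp.const_mul _).sub (integrable_const _)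
    have hInt2 : Integrable (fun ω => (μ[f|𝒢 m]) ω ^ (k + 1)) μ := by
      have := hQint (List.replicate (k + 1) m)
      simpa only [hrep] using this
    have h_ae : ∀ᵐ ω ∂μ, ((k : ℝ) + 1) * b ^ k * (μ[f|𝒢 m]) ω - (k : ℝ) * b ^ (k + 1)
        ≤ (μ[f|𝒢 m]) ω ^ (k + 1) := by
      filter_upwards [hg0 m] with ω h using tangent_pow k h hb0
    have hval : ∫ ω, (((k : ℝ) + 1) * b ^ k * (μ[f|𝒢 m]) ω - (k : ℝ) * b ^ (k + 1)) ∂μ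
        = b ^ (k + 1) := by
      rw [integral_sub (integrable_condExp.const_mul _) (integrable_const _),
        integral_const_mul _ _, hbeq, integral_const]
      simp only [measure_univ, ENNReal.toReal_one, probReal_univ, smul_eq_mul, one_mul]
      ring
    calc b ^ (k + 1) = _ := hval.symm
      _ ≤ ∫ ω, (μ[f|𝒢 m]) ω ^ (k + 1) ∂μ := integral_mono_ae hInt1 hInt2 h_ae
  | cons m₂ t ih =>
    intro hsort m k hbound
    obtain ⟨h₂t, hsort_t⟩ := List.pairwise_cons.mp hsort
    have hm₂m : m₂ ≤ m := hbound m₂ List.mem_cons_self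
    set b := ∫ ω, f ω ∂μ with hbdef
    set g1 := μ[f|𝒢 m] with hg1def
    set g2 := μ[f|𝒢 m₂] with hg2def
    set P : Ω → ℝ := fun ω => (t.map (fun m' => (μ[f|𝒢 m']) ω)).prod with hPdef
    obtain ⟨hPsm, hPb⟩ := prod_props μ 𝒢 f hmeas hnonneg hbddC hC t m₂ h₂t
    -- integrability facts
    have J1 : Integrable (fun ω => g1 ω ^ (k + 1) * (g2 ω * P ω)) μ := by
      refine (hQint (List.replicate (k + 1) m ++ (m₂ :: t))).congr (ae_of_all _ fun ω => ?_)
      simp only [List.map_append, List.prod_append, hrep, List.map_cons, List.prod_cons,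
        hg1def, hg2def, hPdef]
    have J2 : Integrable (fun ω => (g2 ω ^ k * (g2 ω * P ω)) * g1 ω) μ := by
      refine (hQint (List.replicate (k + 1) m₂ ++ (t ++ [m]))).congr (ae_of_all _ fun ω => ?_)
      simp only [List.map_append, List.prod_append, hrep, List.map_cons, List.prod_cons,
        List.map_nil, List.prod_nil, hg1def, hg2def, hPdef]
      ring
    have J3 : Integrable (fun ω => g2 ω ^ (k + 1) * (g2 ω * P ω)) μ := by
      refine (hQint (List.replicate (k + 2) m₂ ++ t)).congr (ae_of_all _ fun ω => ?_)
      simp only [List.map_append, List.prod_append, hrep, hg2def, hPdef]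
      ring
    have J4 : Integrable (fun ω => g2 ω ^ (k + 2) * P ω) μ := by
      refine (hQint (List.replicate (k + 2) m₂ ++ t)).congr (ae_of_all _ fun ω => ?_)
      simp only [List.map_append, List.prod_append, hrep, hg2def, hPdef]
    -- strong measurability of G' := g2^k * (g2 * P) w.r.t. 𝒢 m₂
    have hG'sm : StronglyMeasurable[𝒢 m₂] (fun ω => g2 ω ^ k * (g2 ω * P ω)) :=
      ((stronglyMeasurable_condExp.pow k).mul (stronglyMeasurable_condExp.mul hPsm))
    -- pull-out: ∫ G' * g1 = ∫ G' * g2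
    have hpull : ∫ ω, (g2 ω ^ k * (g2 ω * P ω)) * g1 ω ∂μ
        = ∫ ω, (g2 ω ^ k * (g2 ω * P ω)) * g2 ω ∂μ := by
      have h1 := pullout μ (𝒢.le m₂) hG'sm integrable_condExp J2
      rw [h1]
      refine integral_congr_ae ?_
      have htower : μ[g1|𝒢 m₂] =ᵐ[μ] g2 := condExp_condExp_of_le (𝒢.mono hm₂m) (𝒢.le m)
      filter_upwards [htower] with ω hω
      rw [hω]
    -- the tangent-line step
    have hstep : ∫ ω, g2 ω ^ (k + 2) * P ω ∂μ ≤ ∫ ω, g1 ω ^ (k + 1) * (g2 ω * P ω) ∂μ := by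
      have hIntLin : Integrable (fun ω =>
          (((k : ℝ) + 1) * g2 ω ^ k * g1 ω - (k : ℝ) * g2 ω ^ (k + 1)) * (g2 ω * P ω)) μ := by
        refine ((J2.const_mul ((k : ℝ) + 1)).sub (J3.const_mul (k : ℝ))).congr
          (ae_of_all _ fun ω => ?_)
        simp only [Pi.sub_apply]
        ring
      have h_ae : ∀ᵐ ω ∂μ,
          (((k : ℝ) + 1) * g2 ω ^ k * g1 ω - (k : ℝ) * g2 ω ^ (k + 1)) * (g2 ω * P ω)
          ≤ g1 ω ^ (k + 1) * (g2 ω * P ω) := by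
        filter_upwards [hg0 m, hg0 m₂, hPb] with ω h1 h2 h3
        exact mul_le_mul_of_nonneg_right (tangent_pow k h1 h2)
          (mul_nonneg h2 h3.1)
      have hsplit : ∫ ω, (((k : ℝ) + 1) * g2 ω ^ k * g1 ω - (k : ℝ) * g2 ω ^ (k + 1))
          * (g2 ω * P ω) ∂μ
          = ((k : ℝ) + 1) * ∫ ω, (g2 ω ^ k * (g2 ω * P ω)) * g1 ω ∂μ
            - (k : ℝ) * ∫ ω, g2 ω ^ (k + 1) * (g2 ω * P ω) ∂μ := by
        rw [← integral_const_mul _ _, ← integral_const_mul _ _, ← integral_sub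
          (J2.const_mul _) (J3.const_mul _)]
        refine integral_congr_ae (ae_of_all _ fun ω => ?_)
        ring
      have hI1 : ∫ ω, (g2 ω ^ k * (g2 ω * P ω)) * g1 ω ∂μ = ∫ ω, g2 ω ^ (k + 2) * P ω ∂μ := by
        rw [hpull]
        refine integral_congr_ae (ae_of_all _ fun ω => ?_)
        ring
      have hI2 : ∫ ω, g2 ω ^ (k + 1) * (g2 ω * P ω) ∂μ = ∫ ω, g2 ω ^ (k + 2) * P ω ∂μ :=
        integral_congr_ae (ae_of_all _ fun ω => by ring)
      have hlow := integral_mono_ae hIntLin J1 h_ae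
      rw [hsplit, hI1, hI2] at hlow
      calc ∫ ω, g2 ω ^ (k + 2) * P ω ∂μ
          = ((k : ℝ) + 1) * (∫ ω, g2 ω ^ (k + 2) * P ω ∂μ)
            - (k : ℝ) * ∫ ω, g2 ω ^ (k + 2) * P ω ∂μ := by ring
        _ ≤ ∫ ω, g1 ω ^ (k + 1) * (g2 ω * P ω) ∂μ := hlow
    -- assemble with IH
    have hIH := ih hsort_t m₂ (k + 1) (fun m' hm' => h₂t m' hm')
    have hexp : k + 1 + (m₂ :: t).length = (k + 1) + 1 + t.length := by
      simp [List.length_cons]; omega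
    calc b ^ (k + 1 + (m₂ :: t).length) = b ^ ((k + 1) + 1 + t.length) := by rw [hexp]
      _ ≤ ∫ ω, g2 ω ^ ((k + 1) + 1) * P ω ∂μ := hIH
      _ = ∫ ω, g2 ω ^ (k + 2) * P ω ∂μ := by norm_num
      _ ≤ ∫ ω, g1 ω ^ (k + 1) * (g2 ω * P ω) ∂μ := hstep
      _ = ∫ ω, g1 ω ^ (k + 1) * ((m₂ :: t).map (fun m' => (μ[f|𝒢 m']) ω)).prod ∂μ := by
        refine integral_congr_ae (ae_of_all _ fun ω => ?_)
        simp only [List.map_cons, List.prod_cons, hg2def, hPdef]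

/-- For a filtration `(G_m)` and nonnegative bounded measurable `f`,
`E( f · (E_{m₁}f) ⋯ (E_{m_n}f) ) ≥ (E f)^{n+1}`. -/
theorem expectation_product_lower_bound {Ω : Type*} {m0 : MeasurableSpace Ω}
    (μ : Measure Ω) [IsProbabilityMeasure μ] (𝒢 : Filtration ℕ m0)
    (f : Ω → ℝ) (hmeas : Measurable f) (hnonneg : ∀ ω, 0 ≤ f ω)
    (hbdd : ∃ C : ℝ, ∀ ω, f ω ≤ C)
    (n : ℕ) (ms : Fin n → ℕ) :
    (∫ ω, f ω ∂μ) ^ (n + 1) ≤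
      ∫ ω, f ω * ∏ i : Fin n, (μ[f|𝒢 (ms i)]) ω ∂μ := by
  obtain ⟨C₀, hC₀⟩ := hbdd
  set C : ℝ := max C₀ 0 with hCdef
  have hbddC : ∀ ω, f ω ≤ C := fun ω => le_trans (hC₀ ω) (le_max_left _ _)
  have hC : 0 ≤ C := le_max_right _ _
  have hfint : Integrable f μ := by
    refine Integrable.mono' (integrable_const C) hmeas.aestronglyMeasurable ?_
    exact ae_of_all _ fun ω => by
      rw [Real.norm_eq_abs, abs_of_nonneg (hnonneg ω)]; exact hbddC ω
  set L : List ℕ := List.ofFn ms with hLdef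
  set l : List ℕ := L.insertionSort (· ≥ ·) with hldef
  have hperm : l.Perm L := List.perm_insertionSort _ _
  have hsort : l.Pairwise (· ≥ ·) := List.pairwise_insertionSort _ _
  set M : ℕ := L.foldr max 0 with hMdef
  have hMb : ∀ x ∈ L, x ≤ M := le_foldr_max L
  have hlb : ∀ x ∈ l, x ≤ M := fun x hx => hMb x (hperm.mem_iff.mp hx)
  have hofn : ∀ ω : Ω, (∏ i : Fin n, (μ[f|𝒢 (ms i)]) ω)
      = (L.map (fun m' => (μ[f|𝒢 m']) ω)).prod := by
    intro ω
    rw [hLdef, List.map_ofFn, List.prod_ofFn]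
    rfl
  have hQeq : ∀ ω : Ω, (l.map (fun m' => (μ[f|𝒢 m']) ω)).prod
      = (L.map (fun m' => (μ[f|𝒢 m']) ω)).prod :=
    fun ω => (hperm.map _).prod_eq
  obtain ⟨hLsm, hLb⟩ := prod_props μ 𝒢 f hmeas hnonneg hbddC hC L M hMb
  have hQLf_int : Integrable (fun ω => (L.map (fun m' => (μ[f|𝒢 m']) ω)).prod * f ω) μ := by
    refine integrable_of_bdd (C ^ L.length * C)
      (((hLsm.mono (𝒢.le M)).aestronglyMeasurable).mul hmeas.aestronglyMeasurable) ?_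
    filter_upwards [hLb] with ω h
    rw [abs_of_nonneg (mul_nonneg h.1 (hnonneg ω))]
    exact mul_le_mul h.2 (hbddC ω) (hnonneg ω) (pow_nonneg hC _)
  have hlen : l.length = n := by rw [hperm.length_eq, hLdef, List.length_ofFn]
  have hkey := key_claim μ 𝒢 f hmeas hnonneg hbddC hC l hsort M 0 hlb
  rw [hlen] at hkey
  calc (∫ ω, f ω ∂μ) ^ (n + 1) = (∫ ω, f ω ∂μ) ^ (0 + 1 + n) := by congr 1; omega
    _ ≤ ∫ ω, (μ[f|𝒢 M]) ω ^ (0 + 1) * (l.map (fun m' => (μ[f|𝒢 m']) ω)).prod ∂μ := hkey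
    _ = ∫ ω, (L.map (fun m' => (μ[f|𝒢 m']) ω)).prod * (μ[f|𝒢 M]) ω ∂μ := by
        refine integral_congr_ae (ae_of_all _ fun ω => ?_)
        simp only [hQeq]; ring
    _ = ∫ ω, (L.map (fun m' => (μ[f|𝒢 m']) ω)).prod * f ω ∂μ :=
        (pullout μ (𝒢.le M) hLsm hfint hQLf_int).symm
    _ = ∫ ω, f ω * ∏ i : Fin n, (μ[f|𝒢 (ms i)]) ω ∂μ := by
        refine integral_congr_ae (ae_of_all _ fun ω => ?_)
        simp only [hofn]; ring
end

section
/- Let (Ω, F, P) be a probability space with a filtration (G_m)_{m≥0}, E_m f := E(f|G_m). Let f be nonnegative bounded measurable, m a nonnegative integer, and m₁,…,m_n nonnegative integers. Let N be the number of indices i with m_i < m. Then E_m( f · ∏_{i=1}^n E_{m_i} f ) ≥ ( ∏_{i: m_i < m} E_{m_i} f ) · (E_m f)^{n+1−N} almost surely. -/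
open MeasureTheory

open scoped NNReal

namespace CondexpProdAux

variable {Ω : Type*} {m0 : MeasurableSpace Ω} {μ : Measure Ω}

lemma integrable_of_ae_bdd [IsFiniteMeasure μ] {F : Ω → ℝ}
    (hsm : AEStronglyMeasurable F μ) (C : ℝ) (h : ∀ᵐ ω ∂μ, |F ω| ≤ C) :
    Integrable F μ :=
  memLp_one_iff_integrable.mp <| MemLp.of_bound hsm C (by simpa [Real.norm_eq_abs] using h)

lemma tangent_pow {x y : ℝ} (hx : 0 ≤ x) (hy : 0 ≤ y) (p : ℕ) :
    y ^ (p + 1) + (p + 1 : ℝ) * y ^ p * (x - y) ≤ x ^ (p + 1) := by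
  have key : (∑ i ∈ Finset.range (p + 1), x ^ i * y ^ (p - i)) * (x - y)
      = x ^ (p + 1) - y ^ (p + 1) := by
    simpa using geom_sum₂_mul x y (p + 1)
  rcases le_total y x with hxy | hxy
  · have hsum : (p + 1 : ℝ) * y ^ p ≤ ∑ i ∈ Finset.range (p + 1), x ^ i * y ^ (p - i) := by
      have hterm : ∀ i ∈ Finset.range (p + 1), y ^ p ≤ x ^ i * y ^ (p - i) := by
        intro i hi
        rw [Finset.mem_range] at hi
        have h1 : y ^ p = y ^ i * y ^ (p - i) := by rw [← pow_add]; congr 1; omega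
        rw [h1]
        exact mul_le_mul_of_nonneg_right (pow_le_pow_left₀ hy hxy i) (pow_nonneg hy _)
      calc (p + 1 : ℝ) * y ^ p = ∑ _i ∈ Finset.range (p + 1), y ^ p := by
            rw [Finset.sum_const, Finset.card_range, nsmul_eq_mul]; push_cast; ring
        _ ≤ _ := Finset.sum_le_sum hterm
    have := mul_le_mul_of_nonneg_right hsum (sub_nonneg.2 hxy)
    linarith
  · have hsum : ∑ i ∈ Finset.range (p + 1), x ^ i * y ^ (p - i) ≤ (p + 1 : ℝ) * y ^ p := by
      have hterm : ∀ i ∈ Finset.range (p + 1), x ^ i * y ^ (p - i) ≤ y ^ p := by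
        intro i hi
        rw [Finset.mem_range] at hi
        have h1 : y ^ p = y ^ i * y ^ (p - i) := by rw [← pow_add]; congr 1; omega
        rw [h1]
        exact mul_le_mul_of_nonneg_right (pow_le_pow_left₀ hx hxy i) (pow_nonneg hy _)
      calc ∑ i ∈ Finset.range (p + 1), x ^ i * y ^ (p - i)
          ≤ ∑ _i ∈ Finset.range (p + 1), y ^ p := Finset.sum_le_sum hterm
        _ = (p + 1 : ℝ) * y ^ p := by
            rw [Finset.sum_const, Finset.card_range, nsmul_eq_mul]; push_cast; ring
    have := mul_le_mul_of_nonpos_right hsum (sub_nonpos.2 hxy)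
    linarith

/-- Conditional Jensen inequality for the convex function `x ↦ x ^ (p+1)` applied to a
nonnegative a.e. bounded function. -/
lemma condexp_pow_le [IsProbabilityMeasure μ] {m : MeasurableSpace Ω} (hm : m ≤ m0)
    {g : Ω → ℝ} (hg : Measurable[m0] g) (hg0 : 0 ≤ᵐ[μ] g) {C : ℝ≥0}
    (hgC : ∀ᵐ ω ∂μ, |g ω| ≤ C) (p : ℕ) :
    ∀ᵐ ω ∂μ, (μ[g|m]) ω ^ (p + 1) ≤ (μ[fun ω => g ω ^ (p + 1)|m]) ω := by
  set h : Ω → ℝ := μ[g|m] with hh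
  have hh_sm : StronglyMeasurable[m] h := stronglyMeasurable_condExp
  have hh0 : 0 ≤ᵐ[μ] h := condExp_nonneg hg0
  have hhC : ∀ᵐ ω ∂μ, |h ω| ≤ C := ae_bdd_condExp_of_ae_bdd hgC
  have hint_g : Integrable g μ := integrable_of_ae_bdd (μ := μ) hg.aestronglyMeasurable C hgC
  have hint_gp : Integrable (fun ω => g ω ^ (p + 1)) μ := by
    refine integrable_of_ae_bdd (hg.pow_const _).aestronglyMeasurable ((C : ℝ) ^ (p + 1)) ?_
    filter_upwards [hgC] with ω hω
    rw [abs_pow]; exact pow_le_pow_left₀ (abs_nonneg _) hω _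
  set q1 : Ω → ℝ := fun ω => h ω ^ (p + 1) - (p + 1 : ℝ) * h ω ^ (p + 1) with hq1
  set q2 : Ω → ℝ := fun ω => (p + 1 : ℝ) * h ω ^ p with hq2
  have hq1_sm : StronglyMeasurable[m] q1 :=
    ((hh_sm.measurable.pow_const (p + 1)).sub
      (measurable_const.mul (hh_sm.measurable.pow_const (p + 1)))).stronglyMeasurable
  have hq2_sm : StronglyMeasurable[m] q2 :=
    (measurable_const.mul (hh_sm.measurable.pow_const p)).stronglyMeasurable
  have hint_q1 : Integrable q1 μ := by
    refine integrable_of_ae_bdd ((hq1_sm.mono hm).aestronglyMeasurable)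
      ((p : ℝ) * (C : ℝ) ^ (p + 1)) ?_
    filter_upwards [hhC] with ω hω
    have h1 : q1 ω = -(p : ℝ) * h ω ^ (p + 1) := by simp only [hq1]; push_cast; ring
    rw [h1, abs_mul, abs_neg, abs_pow, Nat.abs_cast]
    exact mul_le_mul_of_nonneg_left (pow_le_pow_left₀ (abs_nonneg _) hω _) (Nat.cast_nonneg _)
  have hint_q2g : Integrable (q2 * g) μ := by
    refine integrable_of_ae_bdd
      (((measurable_const.mul ((hh_sm.mono hm).measurable.pow_const p)).mul
        hg).aestronglyMeasurable)
      (((p : ℝ) + 1) * (C : ℝ) ^ p * (C : ℝ)) ?_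
    filter_upwards [hhC, hgC] with ω hωh hωg
    have : |q2 ω * g ω| = ((p : ℝ) + 1) * |h ω| ^ p * |g ω| := by
      rw [abs_mul, hq2, abs_mul, abs_pow]
      congr 2
      rw [abs_of_nonneg (by positivity)]
    rw [Pi.mul_apply, this]
    have h1 : |h ω| ^ p ≤ (C : ℝ) ^ p := pow_le_pow_left₀ (abs_nonneg _) hωh _
    have h2 : (0 : ℝ) ≤ (p : ℝ) + 1 := by positivity
    exact mul_le_mul (mul_le_mul_of_nonneg_left h1 h2) hωg (abs_nonneg _)
      (by positivity)
  have hφ_le : (q1 + q2 * g) ≤ᵐ[μ] fun ω => g ω ^ (p + 1) := by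
    filter_upwards [hg0, hh0] with ω h1 h2
    have hexp : q1 ω + q2 ω * g ω
        = h ω ^ (p + 1) + (p + 1 : ℝ) * h ω ^ p * (g ω - h ω) := by
      simp only [hq1, hq2]; push_cast; ring
    calc (q1 + q2 * g) ω = q1 ω + q2 ω * g ω := rfl
      _ = h ω ^ (p + 1) + (p + 1 : ℝ) * h ω ^ p * (g ω - h ω) := hexp
      _ ≤ g ω ^ (p + 1) := tangent_pow h1 h2 p
  have eA : μ[q1 + q2 * g|m] =ᵐ[μ] q1 + q2 * h := by
    refine (condExp_add hint_q1 hint_q2g m).trans ?_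
    rw [condExp_of_stronglyMeasurable hm hq1_sm hint_q1]
    exact Filter.EventuallyEq.add Filter.EventuallyEq.rfl
      (condExp_mul_of_stronglyMeasurable_left hq2_sm hint_q2g hint_g)
  have eB : μ[q1 + q2 * g|m] ≤ᵐ[μ] μ[fun ω => g ω ^ (p + 1)|m] :=
    condExp_mono (hint_q1.add hint_q2g) hint_gp hφ_le
  filter_upwards [eA, eB] with ω h1 h2
  have hval : h ω ^ (p + 1) = (q1 + q2 * h) ω := by
    simp only [Pi.add_apply, Pi.mul_apply, hq1, hq2]; push_cast; ring
  rw [hval, ← h1]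
  exact h2

end CondexpProdAux

open CondexpProdAux

/-- The key induction: if all indices of `s` are `≥ m` then
`E_m (f · ∏_{i ∈ s} E_{mᵢ} f) ≥ (E_m f)^(card s + 1)` a.s. -/
lemma condexp_prod_key {Ω : Type*} {m0 : MeasurableSpace Ω}
    (μ : Measure Ω) [IsProbabilityMeasure μ] (𝒢 : Filtration ℕ m0)
    (f : Ω → ℝ) (hmeas : Measurable f) (hnonneg : ∀ ω, 0 ≤ f ω)
    {C : ℝ≥0} (hC : ∀ ω, |f ω| ≤ C) {n : ℕ} (ms : Fin n → ℕ) :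
    ∀ (s : Finset (Fin n)) (m : ℕ), (∀ i ∈ s, m ≤ ms i) →
      ∀ᵐ ω ∂μ, (μ[f|𝒢 m]) ω ^ (s.card + 1) ≤
        (μ[fun ω' => f ω' * ∏ i ∈ s, (μ[f|𝒢 (ms i)]) ω' | 𝒢 m]) ω := by
  have hg_meas : ∀ k : ℕ, Measurable (μ[f|𝒢 k]) :=
    fun k => (stronglyMeasurable_condExp.mono (𝒢.le k)).measurable
  have hg0 : ∀ k : ℕ, 0 ≤ᵐ[μ] μ[f|𝒢 k] := fun k => condExp_nonneg (ae_of_all _ hnonneg)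
  have hgC : ∀ k : ℕ, ∀ᵐ ω ∂μ, |(μ[f|𝒢 k]) ω| ≤ C :=
    fun k => ae_bdd_condExp_of_ae_bdd (ae_of_all _ hC)
  have hmaster : ∀ᵐ ω ∂μ, ∀ i : Fin n,
      0 ≤ (μ[f|𝒢 (ms i)]) ω ∧ |(μ[f|𝒢 (ms i)]) ω| ≤ C :=
    ae_all_iff.2 fun i => ((hg0 (ms i)).and (hgC (ms i)))
  -- integrability of the products
  have hint_prod : ∀ t : Finset (Fin n),
      Integrable (fun ω => f ω * ∏ i ∈ t, (μ[f|𝒢 (ms i)]) ω) μ := by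
    intro t
    refine integrable_of_ae_bdd
      ((hmeas.mul (Finset.measurable_prod t fun i _ => hg_meas (ms i))).aestronglyMeasurable)
      ((C : ℝ) * (C : ℝ) ^ t.card) ?_
    filter_upwards [hmaster] with ω hω
    rw [abs_mul, Finset.abs_prod]
    have h1 : ∏ i ∈ t, |(μ[f|𝒢 (ms i)]) ω| ≤ ∏ _i ∈ t, (C : ℝ) :=
      Finset.prod_le_prod (fun i _ => abs_nonneg _) (fun i _ => (hω i).2)
    rw [Finset.prod_const] at h1
    exact mul_le_mul (hC ω) h1 (Finset.prod_nonneg fun i _ => abs_nonneg _) C.coe_nonneg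
  intro s
  induction s using Finset.strongInduction with
  | _ s ih =>
    intro m hs
    rcases Finset.eq_empty_or_nonempty s with rfl | hne
    · simp only [Finset.prod_empty, mul_one, Finset.card_empty, zero_add, pow_one]
      exact Filter.Eventually.of_forall fun ω => le_rfl
    · obtain ⟨j0, hj0, hmin⟩ := s.exists_min_image ms hne
      have hmm' : m ≤ ms j0 := hs j0 hj0
      have hcard : (s.erase j0).card + 1 = s.card := Finset.card_erase_add_one hj0
      have hIH := ih (s.erase j0) (Finset.erase_ssubset hj0) (ms j0)
        (fun i hi => hmin i (Finset.mem_of_mem_erase hi))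
      set q : Ω → ℝ := μ[f|𝒢 (ms j0)] with hq
      set G : Ω → ℝ := fun ω' => f ω' * ∏ i ∈ s.erase j0, (μ[f|𝒢 (ms i)]) ω' with hG
      have hfun : (fun ω' => f ω' * ∏ i ∈ s, (μ[f|𝒢 (ms i)]) ω') = q * G := by
        funext ω
        simp only [Pi.mul_apply, hq, hG]
        rw [← Finset.prod_erase_mul s _ hj0]
        ring
      have hint_G : Integrable G μ := hint_prod _
      have hint_qG : Integrable (q * G) μ := by
        rw [← hfun]; exact hint_prod _
      have hpull : μ[q * G|𝒢 (ms j0)] =ᵐ[μ] q * μ[G|𝒢 (ms j0)] :=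
        condExp_mul_of_stronglyMeasurable_left stronglyMeasurable_condExp hint_qG hint_G
      -- the inner bound at level `ms j0`
      have inner_ge : (fun ω => q ω ^ (s.card + 1)) ≤ᵐ[μ] μ[q * G|𝒢 (ms j0)] := by
        filter_upwards [hpull, hIH, hg0 (ms j0)] with ω he hih h0
        rw [he, Pi.mul_apply]
        calc q ω ^ (s.card + 1) = q ω * q ω ^ ((s.erase j0).card + 1) := by
              rw [← pow_succ']; congr 1; omega
          _ ≤ q ω * (μ[G|𝒢 (ms j0)]) ω := mul_le_mul_of_nonneg_left hih h0
      have hint_qpow : Integrable (fun ω => q ω ^ (s.card + 1)) μ := by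
        refine integrable_of_ae_bdd ((hg_meas (ms j0)).pow_const _).aestronglyMeasurable
          ((C : ℝ) ^ (s.card + 1)) ?_
        filter_upwards [hgC (ms j0)] with ω hω
        rw [abs_pow]; exact pow_le_pow_left₀ (abs_nonneg _) hω _
      have mono_step : μ[fun ω => q ω ^ (s.card + 1)|𝒢 m] ≤ᵐ[μ] μ[μ[q * G|𝒢 (ms j0)]|𝒢 m] :=
        condExp_mono hint_qpow integrable_condExp inner_ge
      have jensen := condexp_pow_le (μ := μ) (𝒢.le m) (hg_meas (ms j0)) (hg0 (ms j0))
        (hgC (ms j0)) s.card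
      have tower2 : μ[q|𝒢 m] =ᵐ[μ] μ[f|𝒢 m] :=
        condExp_condExp_of_le (𝒢.mono hmm') (𝒢.le (ms j0))
      have tower : μ[μ[q * G|𝒢 (ms j0)]|𝒢 m] =ᵐ[μ] μ[q * G|𝒢 m] :=
        condExp_condExp_of_le (𝒢.mono hmm') (𝒢.le (ms j0))
      rw [hfun]
      filter_upwards [tower, mono_step, jensen, tower2] with ω h1 h2 h3 h4
      calc (μ[f|𝒢 m]) ω ^ (s.card + 1) = (μ[q|𝒢 m]) ω ^ (s.card + 1) := by rw [h4]
        _ ≤ (μ[fun ω => q ω ^ (s.card + 1)|𝒢 m]) ω := h3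
        _ ≤ (μ[μ[q * G|𝒢 (ms j0)]|𝒢 m]) ω := h2
        _ = (μ[q * G|𝒢 m]) ω := h1

/-- For a filtration `(G_m)`, nonnegative bounded measurable `f`, and arbitrary
indices `m, m₁, …, m_n`, with `N` the number of indices `i` with `m_i < m`:
`E_m( f · ∏ᵢ E_{mᵢ} f ) ≥ ( ∏_{i : mᵢ < m} E_{mᵢ} f ) · (E_m f)^{n+1−N}` a.s. -/
theorem condexp_product_lower_bound_mixed {Ω : Type*} {m0 : MeasurableSpace Ω}
    (μ : Measure Ω) [IsProbabilityMeasure μ] (𝒢 : Filtration ℕ m0)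
    (f : Ω → ℝ) (hmeas : Measurable f) (hnonneg : ∀ ω, 0 ≤ f ω)
    (hbdd : ∃ C : ℝ, ∀ ω, f ω ≤ C)
    (n : ℕ) (m : ℕ) (ms : Fin n → ℕ)
    (N : ℕ) (hN : N = (Finset.univ.filter fun i : Fin n => ms i < m).card) :
    ∀ᵐ ω ∂μ,
      (∏ i ∈ Finset.univ.filter fun i : Fin n => ms i < m, (μ[f|𝒢 (ms i)]) ω) *
          (μ[f|𝒢 m]) ω ^ (n + 1 - N) ≤
        (μ[fun ω' => f ω' * ∏ i : Fin n, (μ[f|𝒢 (ms i)]) ω' | 𝒢 m]) ω := by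
  classical
  obtain ⟨C0, hC0⟩ := hbdd
  set C : ℝ≥0 := ⟨max C0 0, le_max_right _ _⟩ with hCdef
  have hC : ∀ ω, |f ω| ≤ C := by
    intro ω
    rw [abs_of_nonneg (hnonneg ω)]
    exact le_trans (hC0 ω) (le_max_left _ _)
  have hg_meas : ∀ k : ℕ, Measurable (μ[f|𝒢 k]) :=
    fun k => (stronglyMeasurable_condExp.mono (𝒢.le k)).measurable
  have hg0 : ∀ k : ℕ, 0 ≤ᵐ[μ] μ[f|𝒢 k] := fun k => condExp_nonneg (ae_of_all _ hnonneg)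
  have hgC : ∀ k : ℕ, ∀ᵐ ω ∂μ, |(μ[f|𝒢 k]) ω| ≤ C :=
    fun k => ae_bdd_condExp_of_ae_bdd (ae_of_all _ hC)
  have hmaster : ∀ᵐ ω ∂μ, ∀ i : Fin n,
      0 ≤ (μ[f|𝒢 (ms i)]) ω ∧ |(μ[f|𝒢 (ms i)]) ω| ≤ C :=
    ae_all_iff.2 fun i => ((hg0 (ms i)).and (hgC (ms i)))
  set sLT : Finset (Fin n) := Finset.univ.filter fun i : Fin n => ms i < m with hsLT
  set sGE : Finset (Fin n) := Finset.univ.filter fun i : Fin n => ¬ ms i < m with hsGE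
  set P : Ω → ℝ := fun ω => ∏ i ∈ sLT, (μ[f|𝒢 (ms i)]) ω with hP
  set G : Ω → ℝ := fun ω => f ω * ∏ i ∈ sGE, (μ[f|𝒢 (ms i)]) ω with hG
  have hsplit : (fun ω' => f ω' * ∏ i : Fin n, (μ[f|𝒢 (ms i)]) ω') = P * G := by
    funext ω
    simp only [Pi.mul_apply, hP, hG]
    rw [← Finset.prod_filter_mul_prod_filter_not Finset.univ (fun i : Fin n => ms i < m)
      (fun i => (μ[f|𝒢 (ms i)]) ω)]
    ring
  have hP_sm : StronglyMeasurable[𝒢 m] P := by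
    refine Measurable.stronglyMeasurable ?_
    refine Finset.measurable_prod _ fun i hi => ?_
    have him : ms i < m := (Finset.mem_filter.mp hi).2
    exact (stronglyMeasurable_condExp.mono (𝒢.mono him.le)).measurable
  -- integrability
  have hint_prod : ∀ t : Finset (Fin n),
      Integrable (fun ω => f ω * ∏ i ∈ t, (μ[f|𝒢 (ms i)]) ω) μ := by
    intro t
    refine integrable_of_ae_bdd
      ((hmeas.mul (Finset.measurable_prod t fun i _ => hg_meas (ms i))).aestronglyMeasurable)
      ((C : ℝ) * (C : ℝ) ^ t.card) ?_
    filter_upwards [hmaster] with ω hω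
    rw [abs_mul, Finset.abs_prod]
    have h1 : ∏ i ∈ t, |(μ[f|𝒢 (ms i)]) ω| ≤ ∏ _i ∈ t, (C : ℝ) :=
      Finset.prod_le_prod (fun i _ => abs_nonneg _) (fun i _ => (hω i).2)
    rw [Finset.prod_const] at h1
    exact mul_le_mul (hC ω) h1 (Finset.prod_nonneg fun i _ => abs_nonneg _) C.coe_nonneg
  have hint_G : Integrable G μ := hint_prod _
  have hint_PG : Integrable (P * G) μ := by
    rw [← hsplit]; exact hint_prod Finset.univ
  have hpull : μ[P * G|𝒢 m] =ᵐ[μ] P * μ[G|𝒢 m] :=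
    condExp_mul_of_stronglyMeasurable_left hP_sm hint_PG hint_G
  have hkey := condexp_prod_key μ 𝒢 f hmeas hnonneg hC ms sGE m
    (fun i hi => not_lt.mp (Finset.mem_filter.mp hi).2)
  -- cardinality bookkeeping
  have hcards : sLT.card + sGE.card = n := by
    rw [hsLT, hsGE]
    rw [Finset.card_filter_add_card_filter_not]
    simp
  have hNn : N = sLT.card := hN
  have hexp : n + 1 - N = sGE.card + 1 := by omega
  rw [hsplit, hexp]
  filter_upwards [hpull, hkey, hmaster] with ω h1 h2 h3
  rw [h1, Pi.mul_apply]
  exact mul_le_mul_of_nonneg_left h2 (Finset.prod_nonneg fun i _ => (h3 i).1)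
end

section
/- Let R > 0, d, n ≥ 1, and t₁,…,t_n ∈ (0, R/2]. Let φ = |B(0,1)|^{-1} 1_{B(0,1)} on ℝ^d and φ_t(x) = t^{-d}φ(x/t). Then there is a constant c = c(d,n) > 0 such that for every measurable f: [0,R]^d → [0,1], ⨍_{[0,R]^d} f(x) ∏_{k=1}^n (f ∗ φ_{t_k})(x) dx ≥ c ( ⨍_{[0,R]^d} f )^{n+1}, where f is extended by zero outside [0,R]^d and ⨍ denotes the average. -/
open Real MeasureTheory

/-- The cube `[0,R]^d` in `ℝ^d`. -/
def cube (d : ℕ) (R : ℝ) : Set (EuclideanSpace ℝ (Fin d)) :=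
  {x | ∀ i, x i ∈ Set.Icc (0 : ℝ) R}

/-- The L¹-normalized indicator `φ = |B(0,1)|⁻¹ 1_{B(0,1)}` of the unit ball,
dilated by `t`: `φ_t(x) = t^{-d} φ(x/t)`. -/
noncomputable def ballDil (d : ℕ) (t : ℝ) (x : EuclideanSpace ℝ (Fin d)) : ℝ :=
  (t ^ d)⁻¹ * ((volume (Metric.ball (0 : EuclideanSpace ℝ (Fin d)) 1)).toReal⁻¹ *
    (Metric.ball (0 : EuclideanSpace ℝ (Fin d)) 1).indicator (fun _ => (1 : ℝ)) (t⁻¹ • x))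

namespace ACLB

open Set

variable {d : ℕ}


/-- box -/
def box (d : ℕ) (B : Fin d → Set ℝ) : Set (EuclideanSpace ℝ (Fin d)) := {x | ∀ i, x i ∈ B i}

lemma box_eq_preimage (B : Fin d → Set ℝ) :
    box d B = (MeasurableEquiv.toLp 2 (Fin d → ℝ)).symm ⁻¹' (Set.univ.pi B) := by
  ext x
  simp [box, Set.mem_pi]

lemma measurableSet_box {B : Fin d → Set ℝ} (hB : ∀ i, MeasurableSet (B i)) :
    MeasurableSet (box d B) := by
  rw [box_eq_preimage]
  exact (MeasurableEquiv.measurable _) (MeasurableSet.univ_pi hB)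

lemma volume_box {B : Fin d → Set ℝ} (hB : ∀ i, MeasurableSet (B i)) :
    volume (box d B) = ∏ i, volume (B i) := by
  rw [box_eq_preimage,
    (EuclideanSpace.volume_preserving_symm_measurableEquiv_toLp (Fin d)).measure_preimage
      ((MeasurableSet.univ_pi hB).nullMeasurableSet)]
  exact volume_pi_pi B

lemma volume_hyperplane (i : Fin d) (c : ℝ) :
    volume {x : EuclideanSpace ℝ (Fin d) | x i = c} = 0 := by
  have : {x : EuclideanSpace ℝ (Fin d) | x i = c}
      = box d (fun j => if j = i then {c} else Set.univ) := by
    ext x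
    simp only [box, Set.mem_setOf_eq]
    constructor
    · intro h j; by_cases hj : j = i <;> simp [hj, h] <;> simp [hj ▸ h]
    · intro h; have := h i; simpa using this
  rw [this, volume_box (fun j => by by_cases hj : j = i <;> simp [hj])]
  refine Finset.prod_eq_zero (Finset.mem_univ i) ?_
  simp



lemma floor_div_nat' (a : ℝ) (N : ℕ) (hN : 0 < N) : ⌊a / N⌋ = ⌊a⌋ / N := by
  have hN' : (0:ℝ) < N := by exact_mod_cast hN
  have hNZ : (0:ℤ) < (N:ℤ) := by exact_mod_cast hN
  set q : ℤ := ⌊a⌋ / N with hq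
  have h1 : q * N ≤ ⌊a⌋ := Int.ediv_mul_le ⌊a⌋ (by omega)
  have h2 : ⌊a⌋ < (q + 1) * N := by
    have := Int.emod_lt_of_pos ⌊a⌋ hNZ
    have := Int.mul_ediv_add_emod ⌊a⌋ (N:ℤ)
    nlinarith [Int.emod_nonneg ⌊a⌋ (by omega : (N:ℤ) ≠ 0)]
  rw [Int.floor_eq_iff]
  constructor
  · rw [le_div_iff₀ hN']
    calc (q:ℝ) * N = ((q * N : ℤ) : ℝ) := by push_cast; ring
    _ ≤ (⌊a⌋ : ℝ) := by exact_mod_cast h1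
    _ ≤ a := Int.floor_le a
  · rw [div_lt_iff₀ hN']
    calc a < (⌊a⌋ : ℝ) + 1 := Int.lt_floor_add_one a
    _ ≤ ((q+1) * N : ℤ) := by
        have : ⌊a⌋ + 1 ≤ (q+1) * N := by omega
        exact_mod_cast this
    _ = ((q:ℝ)+1) * N := by push_cast; ring

lemma floor_scale {s s' : ℝ} (hs' : 0 < s') (N : ℕ) (hN : 0 < N) (h : s = N * s')
    {a b : ℝ} (hab : ⌊a / s'⌋ = ⌊b / s'⌋) : ⌊a / s⌋ = ⌊b / s⌋ := by
  have hNR : (0:ℝ) < N := by exact_mod_cast hN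
  have key : ∀ z : ℝ, z / s = (z / s') / N := by
    intro z
    rw [h, div_div]
    ring_nf
  have ha := key a
  have hb := key b
  rw [ha, hb, floor_div_nat' _ _ hN, floor_div_nat' _ _ hN, hab]

/-- cell of the grid of size `s` containing `x` -/
def cell (s : ℝ) (x : EuclideanSpace ℝ (Fin d)) : Set (EuclideanSpace ℝ (Fin d)) :=
  box d (fun i => Set.Ico (s * ⌊x i / s⌋) (s * ⌊x i / s⌋ + s))

lemma measurableSet_cell (s : ℝ) (x : EuclideanSpace ℝ (Fin d)) : MeasurableSet (cell s x) :=
  measurableSet_box (fun _ => measurableSet_Ico)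

lemma mem_Ico_iff_floor {s : ℝ} (hs : 0 < s) {a : ℝ} {m : ℤ} :
    a ∈ Set.Ico (s * m) (s * m + s) ↔ ⌊a / s⌋ = m := by
  rw [Int.floor_eq_iff]
  constructor
  · rintro ⟨h1, h2⟩
    refine ⟨by rw [le_div_iff₀ hs]; linarith, by rw [div_lt_iff₀ hs]; push_cast; linarith⟩
  · rintro ⟨h1, h2⟩
    rw [le_div_iff₀ hs] at h1
    rw [div_lt_iff₀ hs] at h2
    push_cast at h2
    exact ⟨by linarith, by linarith⟩

lemma mem_cell_iff {s : ℝ} (hs : 0 < s) {x y : EuclideanSpace ℝ (Fin d)} :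
    y ∈ cell s x ↔ ∀ i, ⌊y i / s⌋ = ⌊x i / s⌋ := by
  unfold cell box
  simp only [Set.mem_setOf_eq]
  exact forall_congr' fun i => mem_Ico_iff_floor hs

lemma self_mem_cell {s : ℝ} (hs : 0 < s) (x : EuclideanSpace ℝ (Fin d)) : x ∈ cell s x :=
  (mem_cell_iff hs).2 fun _ => rfl

lemma cell_eq_of_mem {s : ℝ} (hs : 0 < s) {x y : EuclideanSpace ℝ (Fin d)}
    (h : y ∈ cell s x) : cell s y = cell s x := by
  rw [mem_cell_iff hs] at h
  ext z
  rw [mem_cell_iff hs, mem_cell_iff hs]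
  exact forall_congr' fun i => by rw [h i]

lemma volume_cell {s : ℝ} (hs : 0 < s) (x : EuclideanSpace ℝ (Fin d)) :
    volume (cell s x) = ENNReal.ofReal (s ^ d) := by
  rw [cell, volume_box (fun _ => measurableSet_Ico)]
  simp only [Real.volume_Ico, add_sub_cancel_left]
  rw [Finset.prod_const, Finset.card_univ, Fintype.card_fin, ← ENNReal.ofReal_pow hs.le]

lemma volume_cell_toReal {s : ℝ} (hs : 0 < s) (x : EuclideanSpace ℝ (Fin d)) :
    (volume (cell s x)).toReal = s ^ d := by
  rw [volume_cell hs, ENNReal.toReal_ofReal (by positivity)]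

lemma cell_subset_ball {s t : ℝ} (hd : 1 ≤ d) (hs : 0 < s) (hst : Real.sqrt d * s ≤ t)
    {x : EuclideanSpace ℝ (Fin d)} : cell s x ⊆ Metric.ball x t := by
  intro y hy
  rw [mem_cell_iff hs] at hy
  have hcoord : ∀ i, |y i - x i| < s := by
    intro i
    have h1 := (mem_Ico_iff_floor hs).2 (hy i)
    have h2 := (mem_Ico_iff_floor hs).2 (rfl : ⌊x i / s⌋ = ⌊x i / s⌋)
    rw [Set.mem_Ico] at h1 h2
    rw [abs_lt]; constructor <;> linarith
  have hlt : dist y x < Real.sqrt d * s := by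
    rw [EuclideanSpace.dist_eq]
    have hsum : ∑ i, dist (y i) (x i) ^ 2 < d * s ^ 2 := by
      have : ∀ i ∈ Finset.univ, dist (y i) (x i) ^ 2 < s ^ 2 := by
        intro i _
        have := hcoord i
        rw [Real.dist_eq]
        nlinarith [abs_nonneg (y i - x i)]
      calc ∑ i, dist (y i) (x i) ^ 2 < ∑ _i : Fin d, s ^ 2 := by
            apply Finset.sum_lt_sum_of_nonempty ?_ this
            exact Finset.univ_nonempty_iff.2 (by exact Fin.pos_iff_nonempty.mp (by omega))
      _ = d * s ^ 2 := by simp [Finset.sum_const, mul_comm]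
    calc Real.sqrt (∑ i, dist (y i) (x i) ^ 2) < Real.sqrt (d * s ^ 2) := by
          apply Real.sqrt_lt_sqrt (by positivity) hsum
    _ = Real.sqrt d * s := by
        rw [Real.sqrt_mul (by positivity), Real.sqrt_sq hs.le]
  calc dist y x < Real.sqrt d * s := hlt
  _ ≤ t := hst


/-- the half-open cube `[0,R)^d` -/
def Sset (d : ℕ) (R : ℝ) : Set (EuclideanSpace ℝ (Fin d)) :=
  box d (fun _ => Set.Ico (0:ℝ) R)

lemma measurableSet_Sset (d : ℕ) (R : ℝ) : MeasurableSet (Sset d R) :=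
  measurableSet_box (fun _ => measurableSet_Ico)

lemma volume_Sset {R : ℝ} (hR : 0 < R) : volume (Sset d R) = ENNReal.ofReal (R ^ d) := by
  rw [Sset, volume_box (fun _ => measurableSet_Ico)]
  simp only [Real.volume_Ico, sub_zero]
  rw [Finset.prod_const, Finset.card_univ, Fintype.card_fin, ← ENNReal.ofReal_pow hR.le]

lemma volume_Sset_ne_top {R : ℝ} (hR : 0 < R) : volume (Sset d R) ≠ ⊤ := by
  rw [volume_Sset hR]; exact ENNReal.ofReal_ne_top

/-- integrability of bounded functions supported in `Sset` -/
lemma integrable_of_bdd_supp {R : ℝ} (hR : 0 < R) {f : EuclideanSpace ℝ (Fin d) → ℝ}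
    (hm : Measurable f) (hb : ∀ x, |f x| ≤ 1) (hsupp : ∀ x ∉ Sset d R, f x = 0) :
    Integrable f := by
  have hfi : f = (Sset d R).indicator f := by
    ext x
    by_cases h : x ∈ Sset d R
    · simp [h]
    · simp [h, hsupp x h]
  rw [hfi, integrable_indicator_iff (measurableSet_Sset d R)]
  exact ⟨hm.aestronglyMeasurable.restrict,
    HasFiniteIntegral.restrict_of_bounded (C := 1) (volume_Sset_ne_top hR).lt_top
      (Filter.Eventually.of_forall fun x => by simpa using hb x)⟩

lemma integrableOn_of_bdd {A : Set (EuclideanSpace ℝ (Fin d))} (hA : volume A ≠ ⊤)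
    {f : EuclideanSpace ℝ (Fin d) → ℝ} (hm : Measurable f) (hb : ∀ x, |f x| ≤ 1) :
    IntegrableOn f A :=
  ⟨hm.aestronglyMeasurable.restrict,
    HasFiniteIntegral.restrict_of_bounded (C := 1) hA.lt_top
      (Filter.Eventually.of_forall fun x => by simpa using hb x)⟩

/-- grid-averaging operator at scale `s` -/
noncomputable def Eop (s : ℝ) (f : EuclideanSpace ℝ (Fin d) → ℝ)
    (x : EuclideanSpace ℝ (Fin d)) : ℝ :=
  (s ^ d)⁻¹ * ∫ y in cell s x, f y

lemma Eop_nonneg {s : ℝ} (hs : 0 < s) {f : EuclideanSpace ℝ (Fin d) → ℝ} (hf : ∀ y, 0 ≤ f y)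
    (x : EuclideanSpace ℝ (Fin d)) : 0 ≤ Eop s f x :=
  mul_nonneg (by positivity) (setIntegral_nonneg (measurableSet_cell s x) fun y _ => hf y)

lemma Eop_le_one {s : ℝ} (hs : 0 < s) {f : EuclideanSpace ℝ (Fin d) → ℝ}
    (hm : Measurable f) (hb : ∀ y, f y ∈ Set.Icc (0:ℝ) 1) (x : EuclideanSpace ℝ (Fin d)) :
    Eop s f x ≤ 1 := by
  have hsd : (0:ℝ) < s ^ d := by positivity
  have h1 : ∫ y in cell s x, f y ≤ ∫ y in cell s x, (1:ℝ) := by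
    apply setIntegral_mono_on
    · exact integrableOn_of_bdd (by rw [volume_cell hs]; exact ENNReal.ofReal_ne_top) hm
        (fun y => abs_le.2 ⟨by linarith [(hb y).1], (hb y).2⟩)
    · exact integrableOn_const (by rw [volume_cell hs]; exact ENNReal.ofReal_ne_top)
    · exact measurableSet_cell s x
    · exact fun y _ => (hb y).2
  have h2 : ∫ y in cell s x, (1:ℝ) = s ^ d := by
    rw [setIntegral_const, measureReal_def, volume_cell_toReal hs, smul_eq_mul, mul_one]
  rw [Eop]
  calc (s ^ d)⁻¹ * ∫ y in cell s x, f y ≤ (s ^ d)⁻¹ * (s ^ d) := by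
        apply mul_le_mul_of_nonneg_left (h2 ▸ h1) (by positivity)
  _ = 1 := inv_mul_cancel₀ hsd.ne'

lemma Eop_mem_Icc {s : ℝ} (hs : 0 < s) {f : EuclideanSpace ℝ (Fin d) → ℝ}
    (hm : Measurable f) (hb : ∀ y, f y ∈ Set.Icc (0:ℝ) 1) (x : EuclideanSpace ℝ (Fin d)) :
    Eop s f x ∈ Set.Icc (0:ℝ) 1 :=
  ⟨Eop_nonneg hs (fun y => (hb y).1) x, Eop_le_one hs hm hb x⟩

/-- the "same cell" relation as a subset of the product -/
def Rel (d : ℕ) (s : ℝ) : Set (EuclideanSpace ℝ (Fin d) × EuclideanSpace ℝ (Fin d)) :=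
  {p | ∀ i, ⌊p.2 i / s⌋ = ⌊p.1 i / s⌋}

lemma measurableSet_Rel (s : ℝ) : MeasurableSet (Rel d s) := by
  have : Rel d s = ⋂ i, {p : EuclideanSpace ℝ (Fin d) × EuclideanSpace ℝ (Fin d) |
      ⌊p.2 i / s⌋ - ⌊p.1 i / s⌋ = 0} := by
    ext p; simp only [Rel, Set.mem_setOf_eq, Set.mem_iInter, sub_eq_zero]
  rw [this]
  refine MeasurableSet.iInter fun i => ?_
  have hco : Measurable fun x : EuclideanSpace ℝ (Fin d) => x i :=
    (measurable_pi_apply i).comp (MeasurableEquiv.toLp 2 (Fin d → ℝ)).symm.measurable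
  have h1 : Measurable fun p : EuclideanSpace ℝ (Fin d) × EuclideanSpace ℝ (Fin d) =>
      ⌊p.2 i / s⌋ - ⌊p.1 i / s⌋ := by
    apply Measurable.sub
    · exact ((hco.comp measurable_snd).div_const s).floor
    · exact ((hco.comp measurable_fst).div_const s).floor
  exact h1 (MeasurableSet.singleton 0)

lemma mem_Rel_iff {s : ℝ} (hs : 0 < s) {x y : EuclideanSpace ℝ (Fin d)} :
    (x, y) ∈ Rel d s ↔ y ∈ cell s x := (mem_cell_iff hs).symm

noncomputable def Kker (d : ℕ) (s : ℝ)
    (p : EuclideanSpace ℝ (Fin d) × EuclideanSpace ℝ (Fin d)) : ℝ :=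
  (s ^ d)⁻¹ * (Rel d s).indicator (fun _ => (1:ℝ)) p

lemma indicator_one_mem {A : Set α} (p : α) :
    A.indicator (fun _ => (1:ℝ)) p ∈ Set.Icc (0:ℝ) 1 := by
  by_cases h : p ∈ A <;> simp [h]

lemma Kker_nonneg {s : ℝ} (hs : 0 < s) (p) : 0 ≤ Kker d s p := by
  unfold Kker
  exact mul_nonneg (by positivity) (indicator_one_mem p).1

lemma Kker_le {s : ℝ} (hs : 0 < s) (p) : Kker d s p ≤ (s ^ d)⁻¹ := by
  unfold Kker
  calc (s ^ d)⁻¹ * (Rel d s).indicator (fun _ => (1:ℝ)) p ≤ (s ^ d)⁻¹ * 1 :=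
        mul_le_mul_of_nonneg_left (indicator_one_mem p).2 (by positivity)
  _ = _ := mul_one _

lemma measurable_Kker {s : ℝ} : Measurable (Kker d s) :=
  (measurable_const.indicator (measurableSet_Rel s)).const_mul _

lemma Kker_symm {s : ℝ} (x y : EuclideanSpace ℝ (Fin d)) : Kker d s (x, y) = Kker d s (y, x) := by
  unfold Kker
  congr 1
  by_cases h : (x, y) ∈ Rel d s
  · have h' : (y, x) ∈ Rel d s := fun i => (h i).symm
    rw [Set.indicator_of_mem h, Set.indicator_of_mem h']
  · have h' : (y, x) ∉ Rel d s := fun hc => h (fun i => (hc i).symm)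
    rw [Set.indicator_of_notMem h, Set.indicator_of_notMem h']

lemma indicator_cell_eq_Kker {s : ℝ} (hs : 0 < s) (f : EuclideanSpace ℝ (Fin d) → ℝ)
    (x y : EuclideanSpace ℝ (Fin d)) :
    (s ^ d)⁻¹ * (cell s x).indicator f y = Kker d s (x, y) * f y := by
  unfold Kker
  by_cases h : y ∈ cell s x
  · rw [Set.indicator_of_mem h, Set.indicator_of_mem ((mem_Rel_iff hs).2 h)]
    ring
  · rw [Set.indicator_of_notMem h,
      Set.indicator_of_notMem (fun hc => h ((mem_Rel_iff hs).1 hc))]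
    ring

lemma Eop_eq_kernel {s : ℝ} (hs : 0 < s) (f : EuclideanSpace ℝ (Fin d) → ℝ)
    (x : EuclideanSpace ℝ (Fin d)) :
    Eop s f x = ∫ y, Kker d s (x, y) * f y := by
  rw [Eop, ← integral_indicator (measurableSet_cell s x), ← integral_const_mul]
  exact integral_congr_ae (Filter.Eventually.of_forall fun y => indicator_cell_eq_Kker hs f x y)

lemma measurable_Eop {s : ℝ} (hs : 0 < s) {f : EuclideanSpace ℝ (Fin d) → ℝ}
    (hm : Measurable f) : Measurable (Eop s f) := by
  have : Eop s f = fun x => ∫ y, Kker d s (x, y) * f y := funext (Eop_eq_kernel hs f)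
  rw [this]
  have hjm : StronglyMeasurable fun p : EuclideanSpace ℝ (Fin d) × EuclideanSpace ℝ (Fin d) =>
      Kker d s p * f p.2 := (measurable_Kker.mul (hm.comp measurable_snd)).stronglyMeasurable
  exact hjm.integral_prod_right'.measurable

lemma Eop_swap {s : ℝ} (hs : 0 < s) {f g : EuclideanSpace ℝ (Fin d) → ℝ}
    (hfm : Measurable f) (hgm : Measurable g) (hfi : Integrable f) (hgi : Integrable g) :
    ∫ x, f x * Eop s g x = ∫ x, Eop s f x * g x := by
  have hker : Integrable (Function.uncurry fun x y =>
      f x * (Kker d s (x, y) * g y)) (volume.prod volume) := by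
    have hmaj : Integrable (fun p : EuclideanSpace ℝ (Fin d) × EuclideanSpace ℝ (Fin d) =>
        (s ^ d)⁻¹ * (|f p.1| * |g p.2|)) (volume.prod volume) :=
      (Integrable.mul_prod hfi.abs hgi.abs).const_mul _
    apply Integrable.mono' hmaj
    · exact ((hfm.comp measurable_fst).mul
        (measurable_Kker.mul (hgm.comp measurable_snd))).aestronglyMeasurable
    · refine Filter.Eventually.of_forall fun p => ?_
      have h1 : |Kker d s p| ≤ (s ^ d)⁻¹ := by
        rw [abs_of_nonneg (Kker_nonneg hs p)]; exact Kker_le hs p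
      calc ‖f p.1 * (Kker d s p * g p.2)‖ = |f p.1| * (|Kker d s p| * |g p.2|) := by
            simp [Function.uncurry, abs_mul]
      _ ≤ |f p.1| * ((s ^ d)⁻¹ * |g p.2|) := by
            apply mul_le_mul_of_nonneg_left _ (abs_nonneg _)
            exact mul_le_mul_of_nonneg_right h1 (abs_nonneg _)
      _ = (s ^ d)⁻¹ * (|f p.1| * |g p.2|) := by ring
  have hswap := integral_integral_swap hker
  calc ∫ x, f x * Eop s g x = ∫ x, ∫ y, f x * (Kker d s (x, y) * g y) := by
        refine integral_congr_ae (Filter.Eventually.of_forall fun x => ?_)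
        show f x * Eop s g x = ∫ y, f x * (Kker d s (x, y) * g y)
        rw [Eop_eq_kernel hs g x, ← integral_const_mul]
  _ = ∫ y, ∫ x, f x * (Kker d s (x, y) * g y) := hswap
  _ = ∫ y, Eop s f y * g y := by
        refine integral_congr_ae (Filter.Eventually.of_forall fun y => ?_)
        have : ∀ x, f x * (Kker d s (x, y) * g y) = (Kker d s (y, x) * f x) * g y := by
          intro x; rw [Kker_symm]; ring
        simp_rw [this]
        rw [integral_mul_const, Eop_eq_kernel hs f y]

lemma Eop_of_const_on {s : ℝ} (hs : 0 < s) {G : EuclideanSpace ℝ (Fin d) → ℝ}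
    (hG : ∀ x y, y ∈ cell s x → G y = G x) (x : EuclideanSpace ℝ (Fin d)) :
    Eop s G x = G x := by
  have h1 : ∫ y in cell s x, G y = ∫ y in cell s x, G x :=
    setIntegral_congr_fun (measurableSet_cell s x) fun y hy => hG x y hy
  rw [Eop, h1, setIntegral_const, measureReal_def, volume_cell_toReal hs, smul_eq_mul]
  field_simp

lemma Eop_indicator_one_cellular {s s' : ℝ} (hs : 0 < s) (hs' : 0 < s') (N : ℕ) (hN : 0 < N)
    (h : s = N * s') (x : EuclideanSpace ℝ (Fin d)) (y : EuclideanSpace ℝ (Fin d)) :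
    Eop s' ((cell s x).indicator (fun _ => (1:ℝ))) y
      = (cell s x).indicator (fun _ => (1:ℝ)) y := by
  by_cases hy : y ∈ cell s x
  · have hsub : cell s' y ⊆ cell s x := by
      intro z hz
      rw [mem_cell_iff hs'] at hz
      rw [mem_cell_iff hs]
      intro i
      have h1 : ⌊z i / s⌋ = ⌊y i / s⌋ := floor_scale hs' N hN h (hz i)
      rw [h1]
      exact (mem_cell_iff hs).1 hy i
    rw [Set.indicator_of_mem hy, Eop]
    have : ∫ z in cell s' y, (cell s x).indicator (fun _ => (1:ℝ)) z
        = ∫ z in cell s' y, (1:ℝ) :=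
      setIntegral_congr_fun (measurableSet_cell s' y)
        fun z hz => Set.indicator_of_mem (hsub hz) _
    rw [this, setIntegral_const, measureReal_def, volume_cell_toReal hs', smul_eq_mul, mul_one]
    field_simp
  · have hdisj : ∀ z ∈ cell s' y, z ∉ cell s x := by
      intro z hz hzc
      apply hy
      rw [mem_cell_iff hs'] at hz
      rw [mem_cell_iff hs] at hzc ⊢
      intro i
      have h1 : ⌊z i / s⌋ = ⌊y i / s⌋ := floor_scale hs' N hN h (hz i)
      rw [← h1]; exact hzc i
    rw [Set.indicator_of_notMem hy, Eop]
    have : ∫ z in cell s' y, (cell s x).indicator (fun _ => (1:ℝ)) z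
        = ∫ z in cell s' y, (0:ℝ) :=
      setIntegral_congr_fun (measurableSet_cell s' y)
        fun z hz => Set.indicator_of_notMem (hdisj z hz) _
    rw [this]
    simp

lemma Eop_nest {s s' : ℝ} (hs : 0 < s) (hs' : 0 < s') (N : ℕ) (hN : 0 < N)
    (h : s = N * s') {g : EuclideanSpace ℝ (Fin d) → ℝ}
    (hgm : Measurable g) (hgi : Integrable g) (x : EuclideanSpace ℝ (Fin d)) :
    Eop s (Eop s' g) x = Eop s g x := by
  suffices hkey : ∫ y in cell s x, Eop s' g y = ∫ y in cell s x, g y by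
    rw [Eop, Eop, hkey]
  have hCm : MeasurableSet (cell s x) := measurableSet_cell s x
  have hCfin : volume (cell s x) ≠ ⊤ := by rw [volume_cell hs]; exact ENNReal.ofReal_ne_top
  have hCi : Integrable ((cell s x).indicator (fun _ => (1:ℝ))) := by
    rw [integrable_indicator_iff hCm]
    exact integrableOn_const hCfin
  have hCmeas : Measurable ((cell s x).indicator (fun _ => (1:ℝ))) :=
    measurable_const.indicator hCm
  have h1 : ∀ (u : EuclideanSpace ℝ (Fin d) → ℝ),
      ∫ y in cell s x, u y = ∫ y, (cell s x).indicator (fun _ => (1:ℝ)) y * u y := by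
    intro u
    rw [← integral_indicator hCm]
    refine integral_congr_ae (Filter.Eventually.of_forall fun y => ?_)
    by_cases hy : y ∈ cell s x <;> simp [hy]
  rw [h1, h1]
  rw [Eop_swap hs' hCmeas hgm hCi hgi]
  refine integral_congr_ae (Filter.Eventually.of_forall fun y => ?_)
  show Eop s' ((cell s x).indicator (fun _ => (1:ℝ))) y * g y
      = (cell s x).indicator (fun _ => (1:ℝ)) y * g y
  rw [Eop_indicator_one_cellular hs hs' N hN h x y]

section Support

variable {R : ℝ} {j : ℕ}

lemma dy_pos (hR : 0 < R) (j : ℕ) : 0 < R / 2 ^ j := by positivity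

lemma dy_mul (hR : 0 < R) (j : ℕ) : R / 2 ^ j * 2 ^ j = R := by
  field_simp

lemma mem_Sset_iff {x : EuclideanSpace ℝ (Fin d)} :
    x ∈ Sset d R ↔ ∀ i, 0 ≤ x i ∧ x i < R := by
  unfold Sset box
  simp [Set.mem_Ico]

lemma floor_mem_range (hR : 0 < R) {a : ℝ} (h0 : 0 ≤ a) (hlt : a < R) :
    0 ≤ ⌊a / (R / 2 ^ j)⌋ ∧ ⌊a / (R / 2 ^ j)⌋ < 2 ^ j := by
  have hs := dy_pos hR j
  constructor
  · exact Int.floor_nonneg.2 (by positivity)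
  · rw [Int.floor_lt]
    rw [div_lt_iff₀ hs]
    push_cast
    calc a < R := hlt
    _ = R / 2 ^ j * 2 ^ j := (dy_mul hR j).symm
    _ = 2 ^ j * (R / 2 ^ j) := by ring

lemma floor_neg_of_neg (hR : 0 < R) {a : ℝ} (h : a < 0) : ⌊a / (R / 2 ^ j)⌋ < 0 := by
  have hs := dy_pos hR j
  rw [Int.floor_lt]
  push_cast
  exact div_neg_of_neg_of_pos h hs

lemma floor_big_of_big (hR : 0 < R) {a : ℝ} (h : R ≤ a) : (2 ^ j : ℤ) ≤ ⌊a / (R / 2 ^ j)⌋ := by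
  have hs := dy_pos hR j
  rw [Int.le_floor]
  push_cast
  rw [le_div_iff₀ hs]
  calc (2:ℝ) ^ j * (R / 2 ^ j) = R := by field_simp
  _ ≤ a := h

lemma cell_subset_Sset (hR : 0 < R) {x : EuclideanSpace ℝ (Fin d)} (hx : x ∈ Sset d R) :
    cell (R / 2 ^ j) x ⊆ Sset d R := by
  have hs := dy_pos hR j
  intro y hy
  rw [mem_Sset_iff] at hx ⊢
  intro i
  have hfl := (mem_cell_iff hs).1 hy i
  have hrange := floor_mem_range (j := j) hR (hx i).1 (hx i).2
  have hyi : y i ∈ Set.Ico ((R / 2 ^ j) * ⌊y i / (R / 2 ^ j)⌋)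
      ((R / 2 ^ j) * ⌊y i / (R / 2 ^ j)⌋ + (R / 2 ^ j)) :=
    (mem_Ico_iff_floor hs).2 rfl
  rw [Set.mem_Ico] at hyi
  rw [hfl] at hyi
  have hcast1 : (0:ℝ) ≤ (⌊x i / (R / 2 ^ j)⌋ : ℝ) := by
    have h0 : (0:ℤ) ≤ ⌊x i / (R / 2 ^ j)⌋ := hrange.1
    exact_mod_cast h0
  have hcast2 : ((⌊x i / (R / 2 ^ j)⌋ : ℝ) + 1) ≤ (2:ℝ) ^ j := by
    have h2 : (⌊x i / (R / 2 ^ j)⌋ + 1 : ℤ) ≤ 2 ^ j := hrange.2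
    have h3 : ((⌊x i / (R / 2 ^ j)⌋ + 1 : ℤ) : ℝ) ≤ ((2 ^ j : ℤ) : ℝ) := by exact_mod_cast h2
    push_cast at h3
    linarith
  have hmul := dy_mul hR j
  constructor
  · nlinarith [hyi.1, mul_nonneg hs.le hcast1]
  · nlinarith [hyi.2, mul_le_mul_of_nonneg_left hcast2 hs.le]

lemma cell_disjoint_Sset (hR : 0 < R) {x : EuclideanSpace ℝ (Fin d)} (hx : x ∉ Sset d R) :
    ∀ y ∈ cell (R / 2 ^ j) x, y ∉ Sset d R := by
  have hs := dy_pos hR j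
  intro y hy hyS
  apply hx
  rw [mem_Sset_iff] at hyS ⊢
  intro i
  have hfl := (mem_cell_iff hs).1 hy i
  have hrange := floor_mem_range (j := j) hR (hyS i).1 (hyS i).2
  rw [hfl] at hrange
  by_contra hcon
  push_neg at hcon
  rcases le_or_gt 0 (x i) with h0 | h0
  · have hge := floor_big_of_big (j := j) hR (hcon h0)
    omega
  · have hlt := floor_neg_of_neg (j := j) hR h0
    omega

lemma Eop_zero_outside (hR : 0 < R) {g : EuclideanSpace ℝ (Fin d) → ℝ}
    (hsupp : ∀ x ∉ Sset d R, g x = 0) {x : EuclideanSpace ℝ (Fin d)} (hx : x ∉ Sset d R) :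
    Eop (R / 2 ^ j) g x = 0 := by
  have hs := dy_pos hR j
  rw [Eop]
  have : ∫ y in cell (R / 2 ^ j) x, g y = ∫ y in cell (R / 2 ^ j) x, (0:ℝ) :=
    setIntegral_congr_fun (measurableSet_cell _ x)
      fun y hy => hsupp y (cell_disjoint_Sset hR hx y hy)
  rw [this]
  simp

lemma Eop_indicator_Sset (hR : 0 < R) (x : EuclideanSpace ℝ (Fin d)) :
    Eop (R / 2 ^ j) ((Sset d R).indicator (fun _ => (1:ℝ))) x
      = (Sset d R).indicator (fun _ => (1:ℝ)) x := by
  have hs := dy_pos hR j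
  by_cases hx : x ∈ Sset d R
  · rw [Set.indicator_of_mem hx, Eop]
    have : ∫ y in cell (R / 2 ^ j) x, (Sset d R).indicator (fun _ => (1:ℝ)) y
        = ∫ y in cell (R / 2 ^ j) x, (1:ℝ) :=
      setIntegral_congr_fun (measurableSet_cell _ x)
        fun y hy => Set.indicator_of_mem (cell_subset_Sset hR hx hy) _
    rw [this, setIntegral_const, measureReal_def, volume_cell_toReal hs, smul_eq_mul, mul_one]
    field_simp
  · rw [Set.indicator_of_notMem hx, Eop]
    have : ∫ y in cell (R / 2 ^ j) x, (Sset d R).indicator (fun _ => (1:ℝ)) y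
        = ∫ y in cell (R / 2 ^ j) x, (0:ℝ) :=
      setIntegral_congr_fun (measurableSet_cell _ x)
        fun y hy => Set.indicator_of_notMem (cell_disjoint_Sset hR hx y hy) _
    rw [this]
    simp

lemma integral_Eop (hR : 0 < R) {g : EuclideanSpace ℝ (Fin d) → ℝ}
    (hgm : Measurable g) (hgi : Integrable g) (hsupp : ∀ x ∉ Sset d R, g x = 0) :
    ∫ x, Eop (R / 2 ^ j) g x = ∫ x, g x := by
  have hs := dy_pos hR j
  have hSm := measurableSet_Sset d R
  have hSi : Integrable ((Sset d R).indicator (fun _ => (1:ℝ))) := by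
    rw [integrable_indicator_iff hSm]
    exact integrableOn_const (volume_Sset_ne_top hR)
  have hSmeas : Measurable ((Sset d R).indicator (fun _ => (1:ℝ))) :=
    measurable_const.indicator hSm
  calc ∫ x, Eop (R / 2 ^ j) g x
      = ∫ x, (Sset d R).indicator (fun _ => (1:ℝ)) x * Eop (R / 2 ^ j) g x := by
        refine integral_congr_ae (Filter.Eventually.of_forall fun x => ?_)
        by_cases hx : x ∈ Sset d R
        · simp [hx]
        · simp [hx, Eop_zero_outside hR hsupp hx]
  _ = ∫ x, Eop (R / 2 ^ j) ((Sset d R).indicator (fun _ => (1:ℝ))) x * g x :=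
        Eop_swap hs hSmeas hgm hSi hgi
  _ = ∫ x, g x := by
        refine integral_congr_ae (Filter.Eventually.of_forall fun x => ?_)
        show Eop (R / 2 ^ j) ((Sset d R).indicator (fun _ => (1:ℝ))) x * g x = g x
        rw [Eop_indicator_Sset hR x]
        by_cases hx : x ∈ Sset d R
        · simp [hx]
        · simp [hx, hsupp x hx]

end Support

lemma Eop_pow_le {s : ℝ} (hs : 0 < s) (p : ℕ) {g : EuclideanSpace ℝ (Fin d) → ℝ}
    (hm : Measurable g) (hb : ∀ y, g y ∈ Set.Icc (0:ℝ) 1) (x : EuclideanSpace ℝ (Fin d)) :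
    (Eop s g x) ^ p ≤ Eop s (fun y => g y ^ p) x := by
  have hCfin : volume (cell s x) ≠ ⊤ := by rw [volume_cell hs]; exact ENNReal.ofReal_ne_top
  have hC0 : volume (cell s x) ≠ 0 := by
    rw [volume_cell hs]
    simp only [ne_eq, ENNReal.ofReal_eq_zero, not_le]
    positivity
  have hconv : ConvexOn ℝ (Set.Icc (0:ℝ) 1) (fun z : ℝ => z ^ p) :=
    (convexOn_pow p).subset (Set.Icc_subset_Ici_self) (convex_Icc 0 1)
  have hjensen := hconv.map_set_average_le (t := cell s x) (f := g)
    ((continuous_pow p).continuousOn) isClosed_Icc hC0 hCfin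
    (Filter.Eventually.of_forall fun y => hb y)
    (integrableOn_of_bdd hCfin hm (fun y => abs_le.2 ⟨by linarith [(hb y).1], (hb y).2⟩))
    (integrableOn_of_bdd hCfin (hm.pow_const p)
      (fun y => abs_le.2 ⟨by simp only [Function.comp_apply]; linarith [pow_nonneg (hb y).1 p],
        by simp only [Function.comp_apply]; exact pow_le_one₀ (hb y).1 (hb y).2⟩))
  have havg : ∀ (u : EuclideanSpace ℝ (Fin d) → ℝ), (⨍ y in cell s x, u y) = Eop s u x := by
    intro u
    rw [setAverage_eq, measureReal_def, volume_cell_toReal hs, smul_eq_mul, Eop]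
  rw [havg g] at hjensen
  calc (Eop s g x) ^ p ≤ ⨍ y in cell s x, g y ^ p := hjensen
  _ = Eop s (fun y => g y ^ p) x := havg _

lemma Eop_congr_cell {s : ℝ} (hs : 0 < s) {x y : EuclideanSpace ℝ (Fin d)}
    (hy : y ∈ cell s x) (f : EuclideanSpace ℝ (Fin d) → ℝ) : Eop s f y = Eop s f x := by
  rw [Eop, Eop, cell_eq_of_mem hs hy]

lemma abs_le_one_of_Icc {a : ℝ} (h : a ∈ Set.Icc (0:ℝ) 1) : |a| ≤ 1 :=
  abs_le.2 ⟨by linarith [h.1], h.2⟩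

lemma pow_mem_Icc {a : ℝ} (h : a ∈ Set.Icc (0:ℝ) 1) (p : ℕ) : a ^ p ∈ Set.Icc (0:ℝ) 1 :=
  ⟨pow_nonneg h.1 p, pow_le_one₀ h.1 h.2⟩

lemma keyU {R : ℝ} (hR : 0 < R) :
    ∀ (n : ℕ) (p : ℕ), 1 ≤ p → ∀ (j : Fin n → ℕ) (g : EuclideanSpace ℝ (Fin d) → ℝ),
    Measurable g → (∀ x, g x ∈ Set.Icc (0:ℝ) 1) → (∀ x, x ∉ Sset d R → g x = 0) →
    R ^ d * ((∫ x, g x) / R ^ d) ^ (p + n) ≤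
      ∫ x, g x ^ p * ∏ k, Eop (R / 2 ^ (j k)) g x := by
  have hRd : (0:ℝ) < R ^ d := by positivity
  have hSm := measurableSet_Sset d R
  have hvolS : (volume (Sset d R)).toReal = R ^ d := by
    rw [volume_Sset hR, ENNReal.toReal_ofReal hRd.le]
  intro n
  induction n with
  | zero =>
    intro p hp j g hgm hb hsupp
    have hsuppp : ∀ x ∉ Sset d R, g x ^ p = 0 := fun x hx => by
      rw [hsupp x hx]; exact zero_pow (by omega)
    have h1 : ∫ x, g x = ∫ x in Sset d R, g x :=
      (setIntegral_eq_integral_of_forall_compl_eq_zero fun x hx => hsupp x hx).symm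
    have h2 : ∫ x, g x ^ p = ∫ x in Sset d R, g x ^ p :=
      (setIntegral_eq_integral_of_forall_compl_eq_zero fun x hx => hsuppp x hx).symm
    have hconv : ConvexOn ℝ (Set.Icc (0:ℝ) 1) (fun z : ℝ => z ^ p) :=
      (convexOn_pow p).subset (Set.Icc_subset_Ici_self) (convex_Icc 0 1)
    have hjensen := hconv.map_set_average_le (t := Sset d R) (f := g)
      ((continuous_pow p).continuousOn) isClosed_Icc
      (by rw [volume_Sset hR]; simp only [ne_eq, ENNReal.ofReal_eq_zero, not_le]; positivity)
      (volume_Sset_ne_top hR)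
      (Filter.Eventually.of_forall fun y => hb y)
      (integrableOn_of_bdd (volume_Sset_ne_top hR) hgm (fun y => abs_le_one_of_Icc (hb y)))
      (integrableOn_of_bdd (volume_Sset_ne_top hR) (hgm.pow_const p)
        (fun y => by
          simp only [Function.comp_apply]
          exact abs_le_one_of_Icc (pow_mem_Icc (hb y) p)))
    rw [setAverage_eq, setAverage_eq, measureReal_def, hvolS, smul_eq_mul, smul_eq_mul] at hjensen
    simp only [Finset.univ_eq_empty, Finset.prod_empty, mul_one, Nat.add_zero]
    rw [h1, h2]
    have := mul_le_mul_of_nonneg_left hjensen hRd.le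
    calc R ^ d * ((∫ x in Sset d R, g x) / R ^ d) ^ p
        = R ^ d * ((R ^ d)⁻¹ * ∫ x in Sset d R, g x) ^ p := by
          rw [div_eq_inv_mul]
    _ ≤ R ^ d * ((R ^ d)⁻¹ * ∫ x in Sset d R, g x ^ p) := this
    _ = ∫ x in Sset d R, g x ^ p := by field_simp
  | succ n ih =>
    intro p hp j g hgm hb hsupp
    obtain ⟨k₀, -, hk₀⟩ :=
      Finset.exists_max_image (Finset.univ : Finset (Fin (n+1))) j ⟨0, Finset.mem_univ 0⟩
    set sstar : ℝ := R / 2 ^ (j k₀) with hsstar_def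
    have hsstar : 0 < sstar := dy_pos hR _
    set j' : Fin n → ℕ := fun k => j (k₀.succAbove k) with hj'def
    have hscale : ∀ k : Fin n, R / 2 ^ (j' k) = (2 ^ (j k₀ - j' k) : ℕ) * sstar := by
      intro k
      have hle : j' k ≤ j k₀ := hk₀ _ (Finset.mem_univ _)
      have h2 : (2:ℝ) ^ (j k₀) = 2 ^ (j' k) * 2 ^ (j k₀ - j' k) := by
        rw [← pow_add]
        congr 1
        omega
      rw [hsstar_def]
      push_cast
      rw [h2]
      field_simp
    have hNpos : ∀ k : Fin n, 0 < 2 ^ (j k₀ - j' k) := fun k => Nat.pow_pos (by omega)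
    have hgint : Integrable g :=
      integrable_of_bdd_supp hR hgm (fun x => abs_le_one_of_Icc (hb x)) hsupp
    set h : EuclideanSpace ℝ (Fin d) → ℝ := Eop sstar g with hhdef
    have hhm : Measurable h := measurable_Eop hsstar hgm
    have hh01 : ∀ x, h x ∈ Set.Icc (0:ℝ) 1 := Eop_mem_Icc hsstar hgm hb
    have hhsupp : ∀ x ∉ Sset d R, h x = 0 := fun x hx => Eop_zero_outside hR hsupp hx
    have hhint : Integrable h :=
      integrable_of_bdd_supp hR hhm (fun x => abs_le_one_of_Icc (hh01 x)) hhsupp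
    have hinth : ∫ x, h x = ∫ x, g x := integral_Eop hR hgm hgint hsupp
    set G : EuclideanSpace ℝ (Fin d) → ℝ :=
      fun x => h x * ∏ k : Fin n, Eop (R / 2 ^ (j' k)) h x with hGdef
    have hEh01 : ∀ (k : Fin n) x, Eop (R / 2 ^ (j' k)) h x ∈ Set.Icc (0:ℝ) 1 :=
      fun k => Eop_mem_Icc (dy_pos hR _) hhm hh01
    have hprodm : Measurable fun x => ∏ k : Fin n, Eop (R / 2 ^ (j' k)) h x :=
      Finset.measurable_prod _ (fun k _ => measurable_Eop (dy_pos hR _) hhm)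
    have hprod01 : ∀ x, (∏ k : Fin n, Eop (R / 2 ^ (j' k)) h x) ∈ Set.Icc (0:ℝ) 1 := by
      intro x
      constructor
      · exact Finset.prod_nonneg fun k _ => (hEh01 k x).1
      · exact Finset.prod_le_one (fun k _ => (hEh01 k x).1) (fun k _ => (hEh01 k x).2)
    have hGm : Measurable G := hhm.mul hprodm
    have hG01 : ∀ x, G x ∈ Set.Icc (0:ℝ) 1 := fun x =>
      ⟨mul_nonneg (hh01 x).1 (hprod01 x).1,
        mul_le_one₀ (hh01 x).2 (hprod01 x).1 (hprod01 x).2⟩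
    have hGsupp : ∀ x ∉ Sset d R, G x = 0 := fun x hx => by
      rw [hGdef]
      simp only [hhsupp x hx, zero_mul]
    have hGint : Integrable G :=
      integrable_of_bdd_supp hR hGm (fun x => abs_le_one_of_Icc (hG01 x)) hGsupp
    have hGcell : ∀ x y, y ∈ cell sstar x → G y = G x := by
      intro x y hy
      simp only [hGdef]
      have h1 : h y = h x := Eop_congr_cell hsstar hy g
      have h2 : ∀ k : Fin n, Eop (R / 2 ^ (j' k)) h y = Eop (R / 2 ^ (j' k)) h x := by
        intro k
        apply Eop_congr_cell (dy_pos hR _) _ h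
        rw [mem_cell_iff (dy_pos hR _)]
        intro i
        exact floor_scale hsstar _ (hNpos k) (hscale k) ((mem_cell_iff hsstar).1 hy i)
      rw [h1]
      congr 1
      exact Finset.prod_congr rfl fun k _ => h2 k
    have hgp_supp : ∀ x ∉ Sset d R, g x ^ p = 0 := fun x hx => by
      rw [hsupp x hx]; exact zero_pow (by omega)
    have hgpint : Integrable (fun x => g x ^ p) :=
      integrable_of_bdd_supp hR (hgm.pow_const p)
        (fun x => abs_le_one_of_Icc (pow_mem_Icc (hb x) p)) hgp_supp
    have hEgp01 : ∀ x, Eop sstar (fun y => g y ^ p) x ∈ Set.Icc (0:ℝ) 1 :=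
      Eop_mem_Icc hsstar (hgm.pow_const p) (fun y => pow_mem_Icc (hb y) p)
    calc R ^ d * ((∫ x, g x) / R ^ d) ^ (p + (n + 1))
        = R ^ d * ((∫ x, h x) / R ^ d) ^ ((p + 1) + n) := by
          have hexp : p + (n + 1) = (p + 1) + n := by omega
          rw [hinth, hexp]
    _ ≤ ∫ x, h x ^ (p + 1) * ∏ k : Fin n, Eop (R / 2 ^ (j' k)) h x :=
          ih (p + 1) (by omega) j' h hhm hh01 hhsupp
    _ = ∫ x, h x ^ p * G x := by
          refine integral_congr_ae (Filter.Eventually.of_forall fun x => ?_)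
          show h x ^ (p + 1) * _ = h x ^ p * G x
          simp only [hGdef, pow_succ]
          ring
    _ ≤ ∫ x, Eop sstar (fun y => g y ^ p) x * G x := by
          apply integral_mono
          · apply integrable_of_bdd_supp hR (hhm.pow_const p |>.mul hGm)
            · intro x
              apply abs_le_one_of_Icc
              exact ⟨mul_nonneg (pow_mem_Icc (hh01 x) p).1 (hG01 x).1,
                mul_le_one₀ (pow_mem_Icc (hh01 x) p).2 (hG01 x).1 (hG01 x).2⟩
            · intro x hx
              rw [Pi.mul_apply, hGsupp x hx, mul_zero]
          · apply integrable_of_bdd_supp hR ((measurable_Eop hsstar (hgm.pow_const p)).mul hGm)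
            · intro x
              apply abs_le_one_of_Icc
              exact ⟨mul_nonneg (hEgp01 x).1 (hG01 x).1,
                mul_le_one₀ (hEgp01 x).2 (hG01 x).1 (hG01 x).2⟩
            · intro x hx
              rw [Pi.mul_apply, hGsupp x hx, mul_zero]
          · intro x
            exact mul_le_mul_of_nonneg_right (Eop_pow_le hsstar p hgm hb x) (hG01 x).1
    _ = ∫ x, g x ^ p * G x := by
          rw [← Eop_swap hsstar (hgm.pow_const p) hGm hgpint hGint]
          refine integral_congr_ae (Filter.Eventually.of_forall fun x => ?_)
          show g x ^ p * Eop sstar G x = g x ^ p * G x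
          rw [Eop_of_const_on hsstar hGcell x]
    _ = ∫ x, g x ^ p * ∏ k : Fin (n+1), Eop (R / 2 ^ (j k)) g x := by
          refine integral_congr_ae (Filter.Eventually.of_forall fun x => ?_)
          show g x ^ p * G x = _
          simp only [hGdef]
          congr 1
          rw [Fin.prod_univ_succAbove (fun k => Eop (R / 2 ^ (j k)) g x) k₀]
          congr 1
          refine Finset.prod_congr rfl fun k _ => ?_
          show Eop (R / 2 ^ (j' k)) h x = Eop (R / 2 ^ (j' k)) g x
          rw [hhdef]
          exact Eop_nest (dy_pos hR _) hsstar _ (hNpos k) (hscale k) hgm hgint x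

section Conv

lemma measurable_ballDil {t : ℝ} : Measurable (ballDil d t) := by
  unfold ballDil
  apply Measurable.const_mul
  apply Measurable.const_mul
  exact (measurable_const.indicator measurableSet_ball).comp
    (continuous_const_smul (t⁻¹ : ℝ)).measurable

lemma mem_ball_iff_smul {t : ℝ} (ht : 0 < t) (x y : EuclideanSpace ℝ (Fin d)) :
    t⁻¹ • (x - y) ∈ Metric.ball (0 : EuclideanSpace ℝ (Fin d)) 1 ↔ y ∈ Metric.ball x t := by
  rw [mem_ball_zero_iff, Metric.mem_ball, dist_eq_norm, norm_smul, norm_inv,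
    Real.norm_eq_abs, abs_of_pos ht, ← norm_sub_rev x y]
  rw [inv_mul_lt_iff₀ ht, mul_one]

lemma conv_eq {t : ℝ} (ht : 0 < t) (f : EuclideanSpace ℝ (Fin d) → ℝ)
    (x : EuclideanSpace ℝ (Fin d)) :
    (∫ y, f y * ballDil d t (x - y)) =
      (t ^ d * (volume (Metric.ball (0 : EuclideanSpace ℝ (Fin d)) 1)).toReal)⁻¹ *
        ∫ y in Metric.ball x t, f y := by
  set B := (volume (Metric.ball (0 : EuclideanSpace ℝ (Fin d)) 1)).toReal with hB
  have hpt : ∀ y, f y * ballDil d t (x - y)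
      = (t ^ d * B)⁻¹ * (Metric.ball x t).indicator f y := by
    intro y
    unfold ballDil
    by_cases hy : y ∈ Metric.ball x t
    · rw [Set.indicator_of_mem ((mem_ball_iff_smul ht x y).2 hy),
        Set.indicator_of_mem hy]
      rw [mul_inv]
      ring
    · rw [Set.indicator_of_notMem (fun hc => hy ((mem_ball_iff_smul ht x y).1 hc)),
        Set.indicator_of_notMem hy]
      ring
  calc (∫ y, f y * ballDil d t (x - y))
      = ∫ y, (t ^ d * B)⁻¹ * (Metric.ball x t).indicator f y :=
        integral_congr_ae (Filter.Eventually.of_forall hpt)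
  _ = (t ^ d * B)⁻¹ * ∫ y, (Metric.ball x t).indicator f y := integral_const_mul _ _
  _ = (t ^ d * B)⁻¹ * ∫ y in Metric.ball x t, f y := by rw [integral_indicator measurableSet_ball]

lemma volume_ball_toReal (hd : 1 ≤ d) {t : ℝ} (ht : 0 < t) (x : EuclideanSpace ℝ (Fin d)) :
    (volume (Metric.ball x t)).toReal
      = t ^ d * (volume (Metric.ball (0 : EuclideanSpace ℝ (Fin d)) 1)).toReal := by
  haveI : Nontrivial (EuclideanSpace ℝ (Fin d)) := by
    apply nontrivial_of_ne (EuclideanSpace.single ⟨0, by omega⟩ (1:ℝ)) 0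
    intro hcon
    have := congrArg (fun v : EuclideanSpace ℝ (Fin d) => v ⟨0, by omega⟩) hcon
    simp [EuclideanSpace.single_apply] at this
  rw [Measure.addHaar_ball (volume : Measure (EuclideanSpace ℝ (Fin d))) x ht.le,
    finrank_euclideanSpace_fin,
    ENNReal.toReal_mul, ENNReal.toReal_ofReal (by positivity)]

lemma ball_volume_pos (hd : 1 ≤ d) :
    0 < (volume (Metric.ball (0 : EuclideanSpace ℝ (Fin d)) 1)).toReal := by
  apply ENNReal.toReal_pos (Metric.measure_ball_pos volume _ one_pos).ne' measure_ball_lt_top.ne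

end Conv

section ConvBound

lemma exists_scale (hd : 1 ≤ d) {R : ℝ} (hR : 0 < R) {tk : ℝ} (ht0 : 0 < tk)
    (htR : tk ≤ R / 2) :
    ∃ j : ℕ, (Real.sqrt d * (R / 2 ^ j) ≤ tk) ∧ tk < 2 * (Real.sqrt d * (R / 2 ^ j)) := by
  classical
  have hsd : (1:ℝ) ≤ Real.sqrt d := Real.one_le_sqrt.2 (by exact_mod_cast hd)
  have hex : ∃ j : ℕ, Real.sqrt d * (R / 2 ^ j) ≤ tk := by
    obtain ⟨j0, hj0⟩ := pow_unbounded_of_one_lt (Real.sqrt d * R / tk) (one_lt_two (α := ℝ))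
    refine ⟨j0, ?_⟩
    rw [div_lt_iff₀ ht0] at hj0
    have h2 : (0:ℝ) < 2 ^ j0 := by positivity
    calc Real.sqrt d * (R / 2 ^ j0) = (Real.sqrt d * R) / 2 ^ j0 := by ring
    _ ≤ tk := by
        rw [div_le_iff₀ h2]
        nlinarith
  set j := Nat.find hex with hjdef
  have hspec : Real.sqrt d * (R / 2 ^ j) ≤ tk := Nat.find_spec hex
  refine ⟨j, hspec, ?_⟩
  rcases Nat.eq_zero_or_pos j with hj0 | hjpos
  · exfalso
    rw [hj0] at hspec
    simp only [pow_zero, div_one] at hspec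
    nlinarith
  · have hmin : ¬ (Real.sqrt d * (R / 2 ^ (j - 1)) ≤ tk) :=
      Nat.find_min hex (by omega)
    push_neg at hmin
    have hpow : (2:ℝ) ^ (j - 1) * 2 = 2 ^ j := by
      rw [← pow_succ]
      congr 1
      omega
    calc tk < Real.sqrt d * (R / 2 ^ (j - 1)) := hmin
    _ = 2 * (Real.sqrt d * (R / 2 ^ j)) := by
        rw [← hpow]
        field_simp

lemma conv_nonneg {tk : ℝ} (ht0 : 0 < tk) {f : EuclideanSpace ℝ (Fin d) → ℝ}
    (hb : ∀ y, 0 ≤ f y) (x : EuclideanSpace ℝ (Fin d)) :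
    0 ≤ ∫ y, f y * ballDil d tk (x - y) := by
  rw [conv_eq ht0]
  apply mul_nonneg (by positivity)
  exact setIntegral_nonneg measurableSet_ball fun y _ => hb y

lemma conv_le_one (hd : 1 ≤ d) {tk : ℝ} (ht0 : 0 < tk) {f : EuclideanSpace ℝ (Fin d) → ℝ}
    (hfm : Measurable f) (hb : ∀ y, f y ∈ Set.Icc (0:ℝ) 1) (x : EuclideanSpace ℝ (Fin d)) :
    (∫ y, f y * ballDil d tk (x - y)) ≤ 1 := by
  rw [conv_eq ht0]
  set B := (volume (Metric.ball (0 : EuclideanSpace ℝ (Fin d)) 1)).toReal with hBdef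
  have hB : 0 < B := ball_volume_pos hd
  have hfin : volume (Metric.ball x tk) ≠ ⊤ := measure_ball_lt_top.ne
  have h1 : ∫ y in Metric.ball x tk, f y ≤ ∫ y in Metric.ball x tk, (1:ℝ) := by
    apply setIntegral_mono_on
    · exact integrableOn_of_bdd hfin hfm (fun y => abs_le_one_of_Icc (hb y))
    · exact integrableOn_const hfin
    · exact measurableSet_ball
    · exact fun y _ => (hb y).2
  have h2 : ∫ y in Metric.ball x tk, (1:ℝ) = tk ^ d * B := by
    rw [setIntegral_const, measureReal_def, smul_eq_mul, mul_one, volume_ball_toReal hd ht0]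
  calc (tk ^ d * B)⁻¹ * ∫ y in Metric.ball x tk, f y ≤ (tk ^ d * B)⁻¹ * (tk ^ d * B) := by
        apply mul_le_mul_of_nonneg_left (h2 ▸ h1) (by positivity)
  _ = 1 := inv_mul_cancel₀ (by positivity)

lemma conv_measurable {tk : ℝ} {f : EuclideanSpace ℝ (Fin d) → ℝ} (hfm : Measurable f) :
    Measurable fun x => ∫ y, f y * ballDil d tk (x - y) :=
  (((hfm.comp measurable_snd).mul
    (measurable_ballDil.comp (measurable_fst.sub measurable_snd))).stronglyMeasurable
    ).integral_prod_right'.measurable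

lemma conv_lower (hd : 1 ≤ d) {R : ℝ} (hR : 0 < R) {f : EuclideanSpace ℝ (Fin d) → ℝ}
    (hfm : Measurable f) (hb : ∀ y, f y ∈ Set.Icc (0:ℝ) 1) {tk : ℝ} (ht0 : 0 < tk)
    {j : ℕ} (h1 : Real.sqrt d * (R / 2 ^ j) ≤ tk)
    (h2 : tk < 2 * (Real.sqrt d * (R / 2 ^ j))) (x : EuclideanSpace ℝ (Fin d)) :
    ((2 * Real.sqrt d) ^ d *
        (volume (Metric.ball (0 : EuclideanSpace ℝ (Fin d)) 1)).toReal)⁻¹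
      * Eop (R / 2 ^ j) f x ≤ ∫ y, f y * ballDil d tk (x - y) := by
  set B := (volume (Metric.ball (0 : EuclideanSpace ℝ (Fin d)) 1)).toReal with hBdef
  have hB : 0 < B := ball_volume_pos hd
  have hsd : (1:ℝ) ≤ Real.sqrt d := Real.one_le_sqrt.2 (by exact_mod_cast hd)
  set s : ℝ := R / 2 ^ j with hsdef
  have hs : 0 < s := dy_pos hR j
  rw [conv_eq ht0]
  have hsub : cell s x ⊆ Metric.ball x tk := cell_subset_ball hd hs h1
  have hfin : volume (Metric.ball x tk) ≠ ⊤ := measure_ball_lt_top.ne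
  have hmono : ∫ y in cell s x, f y ≤ ∫ y in Metric.ball x tk, f y :=
    setIntegral_mono_set (integrableOn_of_bdd hfin hfm (fun y => abs_le_one_of_Icc (hb y)))
      (Filter.Eventually.of_forall fun y => (hb y).1)
      (HasSubset.Subset.eventuallyLE hsub)
  have hcell_eq : ∫ y in cell s x, f y = s ^ d * Eop s f x := by
    rw [Eop]
    field_simp
  have hE0 : 0 ≤ Eop s f x := Eop_nonneg hs (fun y => (hb y).1) x
  have htpow : tk ^ d ≤ (2 * Real.sqrt d) ^ d * s ^ d := by
    rw [← mul_pow]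
    apply pow_le_pow_left₀ ht0.le
    nlinarith
  have hkey : ((2 * Real.sqrt d) ^ d * B)⁻¹ ≤ (tk ^ d * B)⁻¹ * s ^ d := by
    have hpos1 : (0:ℝ) < tk ^ d * B := by positivity
    have hpos2 : (0:ℝ) < (2 * Real.sqrt d) ^ d * B := by positivity
    rw [mul_comm ((tk ^ d * B)⁻¹) (s ^ d), ← div_eq_mul_inv, le_div_iff₀ hpos1,
      inv_mul_le_iff₀ hpos2]
    nlinarith
  calc ((2 * Real.sqrt d) ^ d * B)⁻¹ * Eop s f x
      ≤ ((tk ^ d * B)⁻¹ * s ^ d) * Eop s f x := mul_le_mul_of_nonneg_right hkey hE0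
  _ = (tk ^ d * B)⁻¹ * ∫ y in cell s x, f y := by rw [hcell_eq]; ring
  _ ≤ (tk ^ d * B)⁻¹ * ∫ y in Metric.ball x tk, f y :=
      mul_le_mul_of_nonneg_left hmono (by positivity)

end ConvBound

end ACLB

open ACLB

/-- There is a constant `c = c(d,n) > 0` such that for every `R > 0`, all
`t₁,…,t_n ∈ (0,R/2]`, and every measurable `f : [0,R]^d → [0,1]` (extended by zero),
`⨍_{[0,R]^d} f ∏ₖ (f ∗ φ_{tₖ}) ≥ c (⨍_{[0,R]^d} f)^{n+1}`. -/
theorem average_convolution_lower_bound (d n : ℕ) (hd : 1 ≤ d) (hn : 1 ≤ n) :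
    ∃ c > (0 : ℝ), ∀ R > (0 : ℝ), ∀ t : Fin n → ℝ,
      (∀ k, t k ∈ Set.Ioc (0 : ℝ) (R / 2)) →
      ∀ f : EuclideanSpace ℝ (Fin d) → ℝ, Measurable f →
      (∀ x, f x ∈ Set.Icc (0 : ℝ) 1) → (∀ x, x ∉ cube d R → f x = 0) →
      c * (⨍ x in cube d R, f x) ^ (n + 1) ≤
        ⨍ x in cube d R,
          f x * ∏ k : Fin n, ∫ y : EuclideanSpace ℝ (Fin d), f y * ballDil d (t k) (x - y) := by
  classical
  set B := (volume (Metric.ball (0 : EuclideanSpace ℝ (Fin d)) 1)).toReal with hBdef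
  have hB : 0 < B := ball_volume_pos hd
  have hsd : (1:ℝ) ≤ Real.sqrt d := Real.one_le_sqrt.2 (by exact_mod_cast hd)
  set c₀ : ℝ := ((2 * Real.sqrt d) ^ d * B)⁻¹ with hc0def
  have hc₀ : 0 < c₀ := by positivity
  refine ⟨c₀ ^ n, by positivity, ?_⟩
  intro R hR t ht f hfm hb hsupp
  have hRd : (0:ℝ) < R ^ d := by positivity
  have hQeq : cube d R = box d (fun _ => Set.Icc (0:ℝ) R) := rfl
  have hQm : MeasurableSet (cube d R) := by
    rw [hQeq]; exact measurableSet_box fun _ => measurableSet_Icc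
  have hQvolE : volume (cube d R) = ENNReal.ofReal (R ^ d) := by
    rw [hQeq, volume_box fun _ => measurableSet_Icc]
    simp only [Real.volume_Icc, sub_zero]
    rw [Finset.prod_const, Finset.card_univ, Fintype.card_fin, ← ENNReal.ofReal_pow hR.le]
  have hQvol : (volume (cube d R)).toReal = R ^ d := by
    rw [hQvolE, ENNReal.toReal_ofReal hRd.le]
  have hQfin : volume (cube d R) ≠ ⊤ := by rw [hQvolE]; exact ENNReal.ofReal_ne_top
  -- scales
  choose J hJ1 hJ2 using fun k : Fin n => exists_scale hd hR (ht k).1 (ht k).2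
  -- the a.e. modification supported in the half-open cube
  set g : EuclideanSpace ℝ (Fin d) → ℝ := (Sset d R).indicator f with hgdef
  have hSm := measurableSet_Sset d R
  have hgm : Measurable g := hfm.indicator hSm
  have hg01 : ∀ x, g x ∈ Set.Icc (0:ℝ) 1 := by
    intro x
    rw [hgdef]
    by_cases hx : x ∈ Sset d R
    · rw [Set.indicator_of_mem hx]; exact hb x
    · rw [Set.indicator_of_notMem hx]; exact ⟨le_refl 0, zero_le_one⟩
  have hgsupp : ∀ x ∉ Sset d R, g x = 0 := fun x hx => by
    rw [hgdef, Set.indicator_of_notMem hx]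
  have hSsubQ : Sset d R ⊆ cube d R := by
    intro x hx
    rw [mem_Sset_iff] at hx
    intro i
    exact ⟨(hx i).1, (hx i).2.le⟩
  have hae : f =ᵐ[volume] g := by
    have hsub : {x | f x ≠ g x} ⊆ ⋃ i, {x : EuclideanSpace ℝ (Fin d) | x i = R} := by
      intro x hx
      simp only [Set.mem_setOf_eq] at hx
      by_cases hxS : x ∈ Sset d R
      · exact absurd (by simp only [hgdef, Set.indicator_of_mem hxS] : f x = g x)
          (fun hc => hx hc)
      · have hg0 : g x = 0 := hgsupp x hxS
        have hf0 : f x ≠ 0 := by rw [hg0] at hx; exact hx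
        have hxQ : x ∈ cube d R := by
          by_contra hc
          exact hf0 (hsupp x hc)
        rw [mem_Sset_iff] at hxS
        push_neg at hxS
        obtain ⟨i, hi⟩ := hxS
        have h1 : 0 ≤ x i := (hxQ i).1
        have h2 : x i ≤ R := (hxQ i).2
        have h3 : x i = R := le_antisymm h2 (by
          by_contra hc
          push_neg at hc
          exact absurd (hi h1) (by push_neg; exact hc))
        exact Set.mem_iUnion.2 ⟨i, h3⟩
    have hnull : volume {x | f x ≠ g x} = 0 :=
      measure_mono_null hsub (measure_iUnion_null fun i => volume_hyperplane i R)
    exact hnull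
  have hEfg : ∀ (j : ℕ) x, Eop (R / 2 ^ j) f x = Eop (R / 2 ^ j) g x := by
    intro j x
    rw [Eop, Eop]
    congr 1
    exact setIntegral_congr_ae (measurableSet_cell _ _) (hae.mono fun y hy _ => hy)
  -- pointwise comparison
  have hpt : ∀ x, c₀ ^ n * (f x * ∏ k : Fin n, Eop (R / 2 ^ (J k)) f x)
      ≤ f x * ∏ k : Fin n, ∫ y, f y * ballDil d (t k) (x - y) := by
    intro x
    have hprod : (∏ k : Fin n, c₀ * Eop (R / 2 ^ (J k)) f x)
        ≤ ∏ k : Fin n, ∫ y, f y * ballDil d (t k) (x - y) := by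
      apply Finset.prod_le_prod
      · intro k _
        exact mul_nonneg hc₀.le (Eop_nonneg (dy_pos hR _) (fun y => (hb y).1) x)
      · intro k _
        exact conv_lower hd hR hfm hb (ht k).1 (hJ1 k) (hJ2 k) x
    have hdistrib : (∏ k : Fin n, c₀ * Eop (R / 2 ^ (J k)) f x)
        = c₀ ^ n * ∏ k : Fin n, Eop (R / 2 ^ (J k)) f x := by
      rw [Finset.prod_mul_distrib, Finset.prod_const, Finset.card_univ, Fintype.card_fin]
    calc c₀ ^ n * (f x * ∏ k : Fin n, Eop (R / 2 ^ (J k)) f x)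
        = f x * (∏ k : Fin n, c₀ * Eop (R / 2 ^ (J k)) f x) := by rw [hdistrib]; ring
    _ ≤ f x * ∏ k : Fin n, ∫ y, f y * ballDil d (t k) (x - y) := by
        apply mul_le_mul_of_nonneg_left hprod (hb x).1
  -- integrabilities on the cube
  have hconv01 : ∀ (k : Fin n) x, (∫ y, f y * ballDil d (t k) (x - y)) ∈ Set.Icc (0:ℝ) 1 :=
    fun k x => ⟨conv_nonneg (ht k).1 (fun y => (hb y).1) x, conv_le_one hd (ht k).1 hfm hb x⟩
  have hEf01 : ∀ (j : ℕ) x, Eop (R / 2 ^ j) f x ∈ Set.Icc (0:ℝ) 1 :=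
    fun j => Eop_mem_Icc (dy_pos hR _) hfm hb
  have hI2 : IntegrableOn
      (fun x => f x * ∏ k : Fin n, ∫ y, f y * ballDil d (t k) (x - y)) (cube d R) := by
    apply integrableOn_of_bdd hQfin
    · exact hfm.mul (Finset.measurable_prod _ fun k _ => conv_measurable hfm)
    · intro x
      apply abs_le_one_of_Icc
      constructor
      · exact mul_nonneg (hb x).1 (Finset.prod_nonneg fun k _ => (hconv01 k x).1)
      · exact mul_le_one₀ (hb x).2 (Finset.prod_nonneg fun k _ => (hconv01 k x).1)
          (Finset.prod_le_one (fun k _ => (hconv01 k x).1) (fun k _ => (hconv01 k x).2))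
  have hI1 : IntegrableOn
      (fun x => c₀ ^ n * (f x * ∏ k : Fin n, Eop (R / 2 ^ (J k)) f x)) (cube d R) := by
    apply Integrable.const_mul
    apply integrableOn_of_bdd hQfin
    · exact hfm.mul (Finset.measurable_prod _ fun k _ => measurable_Eop (dy_pos hR _) hfm)
    · intro x
      apply abs_le_one_of_Icc
      constructor
      · exact mul_nonneg (hb x).1 (Finset.prod_nonneg fun k _ => (hEf01 (J k) x).1)
      · exact mul_le_one₀ (hb x).2 (Finset.prod_nonneg fun k _ => (hEf01 (J k) x).1)
          (Finset.prod_le_one (fun k _ => (hEf01 (J k) x).1) (fun k _ => (hEf01 (J k) x).2))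
  have hstep1 : ∫ x in cube d R, c₀ ^ n * (f x * ∏ k : Fin n, Eop (R / 2 ^ (J k)) f x)
      ≤ ∫ x in cube d R, f x * ∏ k : Fin n, ∫ y, f y * ballDil d (t k) (x - y) :=
    setIntegral_mono_on hI1 hI2 hQm fun x _ => hpt x
  have hstep2 : ∫ x in cube d R, (f x * ∏ k : Fin n, Eop (R / 2 ^ (J k)) f x)
      = ∫ x, g x * ∏ k : Fin n, Eop (R / 2 ^ (J k)) g x := by
    have heq : ∀ᵐ x ∂volume, x ∈ cube d R →
        f x * ∏ k : Fin n, Eop (R / 2 ^ (J k)) f x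
          = g x * ∏ k : Fin n, Eop (R / 2 ^ (J k)) g x := by
      refine hae.mono fun x hfx _ => ?_
      rw [hfx]
      congr 1
      exact Finset.prod_congr rfl fun k _ => hEfg (J k) x
    rw [setIntegral_congr_ae hQm heq]
    apply setIntegral_eq_integral_of_forall_compl_eq_zero
    intro x hx
    rw [hgsupp x (fun hc => hx (hSsubQ hc)), zero_mul]
  have hkey := keyU hR n 1 (le_refl 1) J g hgm hg01 hgsupp
  simp only [pow_one] at hkey
  have hintfg : ∫ x in cube d R, f x = ∫ x, g x := by
    have heq2 : ∀ᵐ x ∂volume, x ∈ cube d R → f x = g x := hae.mono fun x hfx _ => hfx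
    rw [setIntegral_congr_ae hQm heq2]
    apply setIntegral_eq_integral_of_forall_compl_eq_zero
    intro x hx
    exact hgsupp x (fun hc => hx (hSsubQ hc))
  have havgf : ⨍ x in cube d R, f x = (∫ x, g x) / R ^ d := by
    rw [setAverage_eq, measureReal_def, hQvol, smul_eq_mul, hintfg, div_eq_inv_mul]
  calc c₀ ^ n * (⨍ x in cube d R, f x) ^ (n + 1)
      = (R ^ d)⁻¹ * (c₀ ^ n * (R ^ d * ((∫ x, g x) / R ^ d) ^ (1 + n))) := by
        rw [havgf, Nat.add_comm 1 n]
        field_simp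
  _ ≤ (R ^ d)⁻¹ * (c₀ ^ n * ∫ x, g x * ∏ k : Fin n, Eop (R / 2 ^ (J k)) g x) := by
        apply mul_le_mul_of_nonneg_left _ (by positivity)
        exact mul_le_mul_of_nonneg_left hkey (by positivity)
  _ = (R ^ d)⁻¹ * ∫ x in cube d R, c₀ ^ n * (f x * ∏ k : Fin n, Eop (R / 2 ^ (J k)) f x) := by
        rw [integral_const_mul, hstep2]
  _ ≤ (R ^ d)⁻¹ * ∫ x in cube d R,
        f x * ∏ k : Fin n, ∫ y, f y * ballDil d (t k) (x - y) := by
        apply mul_le_mul_of_nonneg_left hstep1 (by positivity)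
  _ = ⨍ x in cube d R,
        f x * ∏ k : Fin n, ∫ y, f y * ballDil d (t k) (x - y) := by
        rw [setAverage_eq, measureReal_def, hQvol, smul_eq_mul]
end
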